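/- arXiv:1011.1058 — 2 statements merged into one kernel-verified Lean document; each statement's English description precedes it below -/
import Mathlib

section
/- Let G = (V_L, V_R, E) be a simple bipartite graph with minimum degree at least 2 and left and right average degrees d_L = |E|/|V_L| and d_R = |E|/|V_R|. If e⃗ is a uniformly chosen directed edge from V_L to V_R, then for every i ≥ 1, E[n_{2i+1}(e⃗)] ≥ (d_R-1)^{i+1}(d_L-1)^i. -/
open Finset Real
open Fin.NatCast
set_option linter.unusedSectionVars false

variable {V : Type*}

/-- \`w : Fin (i+1) → V\` is a non-returning walk of \`i\` edges in \`G\`. -/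
def IsNR (G : SimpleGraph V) (i : ℕ) (w : Fin (i + 1) → V) : Prop :=
  (∀ j : ℕ, ∀ _h : j < i, G.Adj (w ⟨j, by omega⟩) (w ⟨j + 1, by omega⟩)) ∧
  (∀ j : ℕ, ∀ _h : j + 2 ≤ i, w ⟨j, by omega⟩ ≠ w ⟨j + 2, by omega⟩)

/-- \`nE G i u v\` : the number of non-returning walks of \`i + 1\` edges whose
first edge is the directed edge \`(u, v)\`. -/
noncomputable def nE (G : SimpleGraph V) (i : ℕ) (u v : V) : ℕ :=
  Nat.card {w : Fin (i + 2) → V // IsNR G (i + 1) w ∧ w 0 = u ∧ w 1 = v}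

/-! ### Auxiliary convexity lemmas -/

lemma convexOn_phi : ConvexOn ℝ (Set.Ici 2) (fun x : ℝ => x * Real.log (x - 1)) := by
  have hd : ∀ x : ℝ, 1 < x →
      HasDerivAt (fun y : ℝ => y * Real.log (y - 1)) (Real.log (x-1) + x * (x-1)⁻¹) x := by
    intro x hx
    have h1 : HasDerivAt (fun y : ℝ => y - 1) 1 x := (hasDerivAt_id x).sub_const 1
    have h2 : HasDerivAt (fun y : ℝ => Real.log (y-1)) (x-1)⁻¹ x := by
      exact ((Real.hasDerivAt_log (by intro h; linarith [sub_eq_zero.mp h] : x - 1 ≠ 0)).comp x h1).congr_deriv (mul_one _)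
    exact ((hasDerivAt_id' x).mul h2).congr_deriv (by rw [one_mul])
  apply MonotoneOn.convexOn_of_deriv (convex_Ici 2)
  · intro x hx
    have hx2 : (2:ℝ) ≤ x := hx
    exact ((hd x (by linarith)).continuousAt).continuousWithinAt
  · intro x hx
    rw [interior_Ici] at hx
    exact ((hd x (lt_trans one_lt_two hx)).differentiableAt).differentiableWithinAt
  · rw [interior_Ici]
    intro a ha b hb hab
    have ha' : (2:ℝ) < a := ha
    have hb' : (2:ℝ) < b := hb
    rw [(hd a (by linarith)).deriv, (hd b (by linarith)).deriv]
    have hA : (1:ℝ) < a - 1 := by linarith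
    have hB : (1:ℝ) < b - 1 := by linarith
    have hlog := Real.log_le_sub_one_of_pos (show (0:ℝ) < (a-1)/(b-1) by positivity)
    rw [Real.log_div (by linarith) (by linarith)] at hlog
    have h1 : a * (a-1)⁻¹ - b * (b-1)⁻¹ ≤ 1 - (a-1)/(b-1) := by
      have h2 : (0:ℝ) < a - 1 := by linarith
      have h3 : (0:ℝ) < b - 1 := by linarith
      have e1 : a * (a-1)⁻¹ = 1 + (a-1)⁻¹ := by field_simp; ring
      have e2 : b * (b-1)⁻¹ = 1 + (b-1)⁻¹ := by field_simp; ring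
      have hyx : (b-1)⁻¹ ≤ (a-1)⁻¹ := inv_anti₀ h2 (by linarith)
      have e3 : (a-1) * (a-1)⁻¹ = 1 := mul_inv_cancel₀ (ne_of_gt h2)
      have e4 : (a-2) * (b-1)⁻¹ ≤ (a-2) * (a-1)⁻¹ :=
        mul_le_mul_of_nonneg_left hyx (by linarith)
      rw [div_eq_mul_inv, e1, e2]
      nlinarith [e3, e4]
    linarith

lemma jensen_deg {S : Finset V} (hS : S.Nonempty) (deg : V → ℝ)
    (hdeg : ∀ v ∈ S, 2 ≤ deg v) :
    (∑ v ∈ S, deg v) * Real.log ((∑ v ∈ S, deg v) / (S.card : ℝ) - 1)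
      ≤ ∑ v ∈ S, deg v * Real.log (deg v - 1) := by
  have hn : (0:ℝ) < (S.card : ℝ) := by exact_mod_cast Finset.card_pos.mpr hS
  have h := convexOn_phi.map_sum_le (t := S) (w := fun _ => ((S.card : ℝ))⁻¹)
      (p := deg) (fun i _ => by positivity)
      (by rw [Finset.sum_const, nsmul_eq_mul, mul_inv_cancel₀ (ne_of_gt hn)])
      (fun i hi => hdeg i hi)
  simp only [smul_eq_mul] at h
  have e : ∑ i ∈ S, (S.card:ℝ)⁻¹ * deg i = (∑ v ∈ S, deg v) / (S.card : ℝ) := by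
    rw [← Finset.mul_sum]; ring
  rw [e, ← Finset.mul_sum] at h
  have h2 := mul_le_mul_of_nonneg_left h hn.le
  calc (∑ v ∈ S, deg v) * Real.log ((∑ v ∈ S, deg v) / (S.card:ℝ) - 1)
      = (S.card:ℝ) * ((∑ v ∈ S, deg v) / (S.card:ℝ) * Real.log ((∑ v ∈ S, deg v)/(S.card:ℝ) - 1)) := by
        field_simp
    _ ≤ (S.card:ℝ) * ((S.card:ℝ)⁻¹ * ∑ v ∈ S, deg v * Real.log (deg v - 1)) := h2
    _ = ∑ v ∈ S, deg v * Real.log (deg v - 1) := by field_simp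

section Core

variable [Fintype V] [DecidableEq V] (G : SimpleGraph V) [DecidableRel G.Adj]

noncomputable def NRW (S : Finset V) (m : ℕ) : Finset (Fin (m + 1) → V) :=
  @Finset.filter _ (fun w => IsNR G m w ∧ w 0 ∈ S) (Classical.decPred _) Finset.univ

lemma mem_NRW {S : Finset V} {m : ℕ} {w : Fin (m+1) → V} :
    w ∈ NRW G S m ↔ IsNR G m w ∧ w 0 ∈ S := by
  simp [NRW]

noncomputable def qw (m : ℕ) (w : Fin (m + 1) → V) : ℝ :=
  ∏ t ∈ Finset.range (m - 1), ((G.degree (w (((t+1 : ℕ)) : Fin (m+1))) : ℝ) - 1)⁻¹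

noncomputable def lw (m : ℕ) (w : Fin (m + 1) → V) : ℝ :=
  ∑ t ∈ Finset.range (m - 1), Real.log ((G.degree (w (((t+1 : ℕ)) : Fin (m+1))) : ℝ) - 1)


/-! ### Fin index helpers -/

lemma fin_cast_mk {n j : ℕ} (h : j < n + 1) : ((j : ℕ) : Fin (n + 1)) = ⟨j, h⟩ := by
  ext
  simp [Fin.val_natCast, Nat.mod_eq_of_lt h]

lemma snoc_mk_lt {n : ℕ} (w : Fin (n + 1) → V) (x : V) {j : ℕ} (h : j < n + 1) {h' : j < n + 2} :
    (Fin.snoc w x : Fin (n+2) → V) ⟨j, h'⟩ = w ⟨j, h⟩ := by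
  have e : (⟨j, h'⟩ : Fin (n + 2)) = Fin.castSucc ⟨j, h⟩ := rfl
  rw [e, Fin.snoc_castSucc]

lemma snoc_mk_last {n : ℕ} (w : Fin (n + 1) → V) (x : V) {h' : n + 1 < n + 2} :
    (Fin.snoc w x : Fin (n+2) → V) ⟨n + 1, h'⟩ = x := by
  have e : (⟨n + 1, h'⟩ : Fin (n + 2)) = Fin.last (n + 1) := rfl
  rw [e, Fin.snoc_last]

lemma cons_mk_zero {n : ℕ} (u : V) (w : Fin (n + 1) → V) {h : 0 < n + 2} :
    (Fin.cons u w : Fin (n+2) → V) ⟨0, h⟩ = u := rfl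

lemma cons_mk_succ {n : ℕ} (u : V) (w : Fin (n + 1) → V) {j : ℕ} (h : j < n + 1)
    {h' : j + 1 < n + 2} : (Fin.cons u w : Fin (n+2) → V) ⟨j + 1, h'⟩ = w ⟨j, h⟩ := by
  have e : (⟨j + 1, h'⟩ : Fin (n + 2)) = Fin.succ ⟨j, h⟩ := rfl
  rw [e, Fin.cons_succ]

/-! ### IsNR transfer lemmas -/

lemma isNR_init {k : ℕ} {w : Fin (k + 3) → V} (h : IsNR G (k + 2) w) :
    IsNR G (k + 1) (Fin.init w) := by
  obtain ⟨h1, h2⟩ := h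
  constructor
  · intro j hj
    have := h1 j (by omega)
    simpa [Fin.init, Fin.castSucc_mk] using this
  · intro j hj
    have := h2 j (by omega)
    simpa [Fin.init, Fin.castSucc_mk] using this

lemma isNR_snoc {k : ℕ} {w : Fin (k + 2) → V} {x : V} (h : IsNR G (k + 1) w)
    (hadj : G.Adj (w ⟨k + 1, by omega⟩) x) (hne : x ≠ w ⟨k, by omega⟩) :
    IsNR G (k + 2) (Fin.snoc w x) := by
  obtain ⟨h1, h2⟩ := h
  constructor
  · intro j hj
    rcases Nat.lt_or_ge j (k+1) with hj' | hj'
    · rw [snoc_mk_lt w x (by omega : j < k+2), snoc_mk_lt w x (by omega : j+1 < k+2)]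
      exact h1 j (by omega)
    · have hjk : j = k + 1 := by omega
      subst hjk
      rw [snoc_mk_lt w x (by omega : k+1 < k+2), snoc_mk_last w x]
      exact hadj
  · intro j hj
    rcases Nat.lt_or_ge (j+2) (k+2) with hj' | hj'
    · rw [snoc_mk_lt w x (by omega : j < k+2), snoc_mk_lt w x (by omega : j+2 < k+2)]
      exact h2 j (by omega)
    · have hjk : j = k := by omega
      subst hjk
      rw [snoc_mk_lt w x (by omega : j < j+2), snoc_mk_last w x]
      exact fun hh => hne hh.symm

lemma isNR_tail {k : ℕ} {w : Fin (k + 3) → V} (h : IsNR G (k + 2) w) :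
    IsNR G (k + 1) (Fin.tail w) := by
  obtain ⟨h1, h2⟩ := h
  constructor
  · intro j hj
    have := h1 (j+1) (by omega)
    simpa [Fin.tail, Fin.succ_mk] using this
  · intro j hj
    have := h2 (j+1) (by omega)
    simpa [Fin.tail, Fin.succ_mk] using this

lemma isNR_cons {k : ℕ} {w : Fin (k + 2) → V} {u : V} (h : IsNR G (k + 1) w)
    (hadj : G.Adj u (w ⟨0, by omega⟩)) (hne : u ≠ w ⟨1, by omega⟩) :
    IsNR G (k + 2) (Fin.cons u w) := by
  obtain ⟨h1, h2⟩ := h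
  constructor
  · intro j hj
    match j, hj with
    | 0, hj =>
      rw [cons_mk_zero u w, cons_mk_succ u w (by omega : 0 < k+2)]
      exact hadj
    | (j+1), hj =>
      rw [cons_mk_succ u w (by omega : j < k+2), cons_mk_succ u w (by omega : j+1 < k+2)]
      exact h1 j (by omega)
  · intro j hj
    match j, hj with
    | 0, hj =>
      rw [cons_mk_zero u w, cons_mk_succ u w (by omega : 1 < k+2)]
      exact hne
    | (j+1), hj =>
      rw [cons_mk_succ u w (by omega : j < k+2), cons_mk_succ u w (by omega : j+2 < k+2)]
      exact h2 j (by omega)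

/-! ### Sum decomposition lemmas -/

lemma sum_NRW_one (S : Finset V) (F : (Fin 2 → V) → ℝ) :
    ∑ w ∈ NRW G S 1, F w = ∑ u ∈ S, ∑ v ∈ G.neighborFinset u, F ![u, v] := by
  rw [Finset.sum_sigma']
  refine Finset.sum_bij' (fun w _ => (⟨w 0, w 1⟩ : Σ _ : V, V))
    (fun p _ => ![p.1, p.2]) ?_ ?_ ?_ ?_ ?_
  · intro w hw
    rw [mem_NRW] at hw
    obtain ⟨⟨h1, _⟩, h0⟩ := hw
    rw [Finset.mem_sigma]
    refine ⟨h0, ?_⟩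
    rw [SimpleGraph.mem_neighborFinset]
    have := h1 0 (by omega)
    simpa using this
  · intro p hp
    rw [Finset.mem_sigma] at hp
    rw [mem_NRW]
    constructor
    · constructor
      · intro j hj
        have hj0 : j = 0 := by omega
        subst hj0
        have : G.Adj p.1 p.2 := (SimpleGraph.mem_neighborFinset _ _ _).mp hp.2
        simpa using this
      · intro j hj
        omega
    · simpa using hp.1
  · intro w hw
    funext j
    fin_cases j <;> simp
  · intro p hp
    simp
  · intro w hw
    have : ![w 0, w 1] = w := by funext j; fin_cases j <;> simp
    rw [this]

lemma peel_right (S : Finset V) (k : ℕ) (F : (Fin (k + 3) → V) → ℝ) :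
    ∑ w ∈ NRW G S (k + 2), F w
      = ∑ w' ∈ NRW G S (k + 1),
          ∑ x ∈ G.neighborFinset (w' ⟨k + 1, by omega⟩) \ {w' ⟨k, by omega⟩},
            F (Fin.snoc w' x) := by
  rw [Finset.sum_sigma']
  refine Finset.sum_bij'
    (fun w _ => (⟨Fin.init w, w (Fin.last (k+2))⟩ : Σ _ : Fin (k+2) → V, V))
    (fun p _ => Fin.snoc p.1 p.2) ?_ ?_ ?_ ?_ ?_
  · intro w hw
    rw [mem_NRW] at hw
    obtain ⟨hNR, h0⟩ := hw
    rw [Finset.mem_sigma]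
    constructor
    · rw [mem_NRW]
      refine ⟨isNR_init G hNR, ?_⟩
      simpa [Fin.init] using h0
    · rw [Finset.mem_sdiff, SimpleGraph.mem_neighborFinset, Finset.mem_singleton]
      obtain ⟨h1, h2⟩ := hNR
      constructor
      · have := h1 (k+1) (by omega)
        simpa [Fin.init, Fin.castSucc_mk, Fin.last] using this
      · have := h2 k (by omega)
        simp only [Fin.init, Fin.castSucc_mk, Fin.last]
        exact fun hh => (this hh.symm)
  · intro p hp
    rw [Finset.mem_sigma, mem_NRW, Finset.mem_sdiff, SimpleGraph.mem_neighborFinset,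
      Finset.mem_singleton] at hp
    obtain ⟨⟨hNR, h0⟩, hadj, hne⟩ := hp
    rw [mem_NRW]
    refine ⟨isNR_snoc G hNR hadj hne, ?_⟩
    have e : (Fin.snoc p.1 p.2 : Fin (k+3) → V) 0 = p.1 0 := by
      rw [show (0 : Fin (k+3)) = ⟨0, by omega⟩ from rfl, snoc_mk_lt p.1 p.2 (by omega : 0 < k+2),
        show (⟨0, by omega⟩ : Fin (k+2)) = 0 from rfl]
    show (Fin.snoc p.1 p.2 : Fin (k+3) → V) 0 ∈ S
    rw [e]
    exact h0
  · intro w hw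
    exact Fin.snoc_init_self w
  · intro p hp
    simp [Fin.init_snoc, Fin.snoc_last]
  · intro w hw
    rw [Fin.snoc_init_self]

lemma peel_left (A B : Finset V) (hAB : ∀ u v, G.Adj u v → (u ∈ A ↔ v ∈ B)) (k : ℕ)
    (F : (Fin (k + 3) → V) → ℝ) :
    ∑ w ∈ NRW G A (k + 2), F w
      = ∑ w' ∈ NRW G B (k + 1),
          ∑ u ∈ G.neighborFinset (w' ⟨0, by omega⟩) \ {w' ⟨1, by omega⟩},
            F (Fin.cons u w') := by
  rw [Finset.sum_sigma']
  refine Finset.sum_bij'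
    (fun w _ => (⟨Fin.tail w, w 0⟩ : Σ _ : Fin (k+2) → V, V))
    (fun p _ => Fin.cons p.2 p.1) ?_ ?_ ?_ ?_ ?_
  · intro w hw
    rw [mem_NRW] at hw
    obtain ⟨hNR, h0⟩ := hw
    have hadj01 : G.Adj (w ⟨0, by omega⟩) (w ⟨1, by omega⟩) := hNR.1 0 (by omega)
    have e1 : Fin.tail w 0 = w ⟨1, by omega⟩ := rfl
    have e0 : Fin.tail w ⟨0, by omega⟩ = w ⟨1, by omega⟩ := rfl
    have e2 : Fin.tail w ⟨1, by omega⟩ = w ⟨2, by omega⟩ := rfl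
    rw [Finset.mem_sigma]
    constructor
    · rw [mem_NRW]
      refine ⟨isNR_tail G hNR, ?_⟩
      show Fin.tail w 0 ∈ B
      rw [e1]
      exact (hAB _ _ hadj01).mp (by simpa using h0)
    · rw [Finset.mem_sdiff, SimpleGraph.mem_neighborFinset, Finset.mem_singleton]
      constructor
      · show G.Adj (Fin.tail w ⟨0, by omega⟩) (w 0)
        rw [e0, show w 0 = w ⟨0, by omega⟩ from rfl]
        exact hadj01.symm
      · show ¬ w 0 = Fin.tail w ⟨1, by omega⟩
        rw [e2, show w 0 = w ⟨0, by omega⟩ from rfl]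
        exact hNR.2 0 (by omega)
  · intro p hp
    rw [Finset.mem_sigma, mem_NRW, Finset.mem_sdiff, SimpleGraph.mem_neighborFinset,
      Finset.mem_singleton] at hp
    obtain ⟨⟨hNR, h0⟩, hadj, hne⟩ := hp
    rw [mem_NRW]
    have hadj' : G.Adj p.2 (p.1 ⟨0, by omega⟩) := hadj.symm
    refine ⟨isNR_cons G hNR hadj' hne, ?_⟩
    have e : (Fin.cons p.2 p.1 : Fin (k+3) → V) 0 = p.2 := rfl
    rw [e]
    exact (hAB _ _ hadj').mpr (by simpa using h0)
  · intro w hw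
    exact Fin.cons_self_tail w
  · intro p hp
    simp [Fin.tail_cons, Fin.cons_zero]
  · intro w hw
    rw [Fin.cons_self_tail]

/-! ### Weight evaluation lemmas -/

lemma qw_one (w : Fin 2 → V) : qw G 1 w = 1 := by simp [qw]

lemma lw_one (w : Fin 2 → V) : lw G 1 w = 0 := by simp [lw]

lemma qw_snoc (k : ℕ) (w' : Fin (k + 2) → V) (x : V) :
    qw G (k + 2) (Fin.snoc w' x)
      = qw G (k + 1) w' * ((G.degree (w' ⟨k + 1, by omega⟩) : ℝ) - 1)⁻¹ := by
  unfold qw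
  rw [show k + 2 - 1 = k + 1 from rfl, Finset.prod_range_succ]
  congr 1
  · apply Finset.prod_congr rfl
    intro t ht
    have htk : t < k := Finset.mem_range.mp ht
    rw [fin_cast_mk (n := k + 2) (by omega), fin_cast_mk (n := k + 1) (by omega),
      snoc_mk_lt w' x (by omega : t + 1 < k + 2)]
  · rw [fin_cast_mk (n := k + 2) (by omega), snoc_mk_lt w' x (by omega : k + 1 < k + 2)]

lemma lw_snoc (k : ℕ) (w' : Fin (k + 2) → V) (x : V) :
    lw G (k + 2) (Fin.snoc w' x)
      = lw G (k + 1) w' + Real.log ((G.degree (w' ⟨k + 1, by omega⟩) : ℝ) - 1) := by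
  unfold lw
  rw [show k + 2 - 1 = k + 1 from rfl, Finset.sum_range_succ]
  congr 1
  · apply Finset.sum_congr rfl
    intro t ht
    have htk : t < k := Finset.mem_range.mp ht
    rw [fin_cast_mk (n := k + 2) (by omega), fin_cast_mk (n := k + 1) (by omega),
      snoc_mk_lt w' x (by omega : t + 1 < k + 2)]
  · rw [fin_cast_mk (n := k + 2) (by omega), snoc_mk_lt w' x (by omega : k + 1 < k + 2)]

lemma qw_cons (k : ℕ) (w' : Fin (k + 2) → V) (u : V) :
    qw G (k + 2) (Fin.cons u w')
      = ((G.degree (w' ⟨0, by omega⟩) : ℝ) - 1)⁻¹ * qw G (k + 1) w' := by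
  unfold qw
  rw [show k + 2 - 1 = k + 1 from rfl, Finset.prod_range_succ']
  rw [mul_comm, show k + 1 - 1 = k from rfl]
  congr 1
  · apply Finset.prod_congr rfl
    intro t ht
    have htk : t < k := Finset.mem_range.mp ht
    rw [fin_cast_mk (n := k + 2) (by omega), fin_cast_mk (n := k + 1) (by omega),
      cons_mk_succ u w' (by omega : t + 1 < k + 2)]

lemma qw_pos {m : ℕ} (hdeg : ∀ v : V, 2 ≤ G.degree v) (w : Fin (m + 1) → V) :
    0 < qw G m w := by
  apply Finset.prod_pos
  intro t _
  have := hdeg (w (((t+1 : ℕ)) : Fin (m+1)))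
  have h2 : (2:ℝ) ≤ (G.degree (w (((t+1 : ℕ)) : Fin (m+1))) : ℝ) := by exact_mod_cast this
  have h3 : (0:ℝ) < (G.degree (w (((t+1 : ℕ)) : Fin (m+1))) : ℝ) - 1 := by linarith
  exact inv_pos.mpr h3

lemma exp_lw {m : ℕ} (hdeg : ∀ v : V, 2 ≤ G.degree v) (w : Fin (m + 1) → V) :
    Real.exp (lw G m w) = (qw G m w)⁻¹ := by
  unfold lw qw
  rw [Real.exp_sum, ← Finset.prod_inv_distrib]
  apply Finset.prod_congr rfl
  intro t _
  rw [inv_inv]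
  apply Real.exp_log
  have := hdeg (w (((t+1 : ℕ)) : Fin (m+1)))
  have h2 : (2:ℝ) ≤ (G.degree (w (((t+1 : ℕ)) : Fin (m+1))) : ℝ) := by exact_mod_cast this
  linarith

/-! ### Extension counting -/

lemma card_ext {u v : V} (h : G.Adj u v) :
    ((G.neighborFinset v \ {u}).card : ℝ) = (G.degree v : ℝ) - 1 := by
  have hmem : u ∈ G.neighborFinset v := by rw [SimpleGraph.mem_neighborFinset]; exact h.symm
  rw [Finset.card_sdiff_of_subset (Finset.singleton_subset_iff.mpr hmem), Finset.card_singleton]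
  have : 1 ≤ (G.neighborFinset v).card := Finset.card_pos.mpr ⟨u, hmem⟩
  rw [SimpleGraph.card_neighborFinset_eq_degree] at *
  push_cast [Nat.cast_sub this]
  ring

/-! ### Total mass -/

lemma deg_real_pos {v : V} (hdeg : ∀ v : V, 2 ≤ G.degree v) :
    (0:ℝ) < (G.degree v : ℝ) - 1 := by
  have := hdeg v
  have h2 : (2:ℝ) ≤ (G.degree v : ℝ) := by exact_mod_cast this
  linarith

lemma sum_qw (S : Finset V) (hdeg : ∀ v : V, 2 ≤ G.degree v) (k : ℕ) :
    ∑ w ∈ NRW G S (k + 1), qw G (k + 1) w = ∑ u ∈ S, (G.degree u : ℝ) := by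
  induction k with
  | zero =>
    rw [sum_NRW_one G S (fun w => qw G 1 w)]
    apply Finset.sum_congr rfl
    intro u _
    simp only [qw_one]
    rw [Finset.sum_const, nsmul_eq_mul, mul_one, SimpleGraph.card_neighborFinset_eq_degree]
  | succ n ih =>
    rw [peel_right G S n (fun w => qw G (n + 2) w), ← ih]
    apply Finset.sum_congr rfl
    intro w' hw'
    rw [mem_NRW] at hw'
    have hadj : G.Adj (w' ⟨n, by omega⟩) (w' ⟨n + 1, by omega⟩) := hw'.1.1 n (by omega)
    have hdpos := deg_real_pos (v := w' ⟨n + 1, by omega⟩) G hdeg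
    calc ∑ x ∈ G.neighborFinset (w' ⟨n + 1, by omega⟩) \ {w' ⟨n, by omega⟩},
            qw G (n + 2) (Fin.snoc w' x)
        = ∑ _x ∈ G.neighborFinset (w' ⟨n + 1, by omega⟩) \ {w' ⟨n, by omega⟩},
            qw G (n + 1) w' * ((G.degree (w' ⟨n + 1, by omega⟩) : ℝ) - 1)⁻¹ :=
          Finset.sum_congr rfl fun x _ => qw_snoc G n w' x
      _ = ((G.degree (w' ⟨n + 1, by omega⟩) : ℝ) - 1)
            * (qw G (n + 1) w' * ((G.degree (w' ⟨n + 1, by omega⟩) : ℝ) - 1)⁻¹) := by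
          rw [Finset.sum_const, nsmul_eq_mul, card_ext G hadj]
      _ = qw G (n + 1) w' := by field_simp

/-! ### Endpoint marginals -/

noncomputable def emg (A : Finset V) (m : ℕ) (f : V → ℝ) : ℝ :=
  ∑ w ∈ NRW G A m, qw G m w * f (w (Fin.last m))

lemma em_one (A : Finset V) (f : V → ℝ) :
    emg G A 1 f = ∑ u ∈ A, ∑ v ∈ G.neighborFinset u, f v := by
  unfold emg
  rw [sum_NRW_one G A (fun w => qw G 1 w * f (w (Fin.last 1)))]
  apply Finset.sum_congr rfl
  intro u _
  apply Finset.sum_congr rfl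
  intro v _
  rw [qw_one, one_mul]
  congr 1

lemma em_step (A B : Finset V) (hAB : ∀ u v, G.Adj u v → (u ∈ A ↔ v ∈ B))
    (hdeg : ∀ v : V, 2 ≤ G.degree v) (k : ℕ) (f : V → ℝ) :
    emg G A (k + 2) f = emg G B (k + 1) f := by
  unfold emg
  rw [peel_left G A B hAB k (fun w => qw G (k + 2) w * f (w (Fin.last (k + 2))))]
  apply Finset.sum_congr rfl
  intro w' hw'
  rw [mem_NRW] at hw'
  have hadj : G.Adj (w' ⟨0, by omega⟩) (w' ⟨1, by omega⟩) := hw'.1.1 0 (by omega)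
  have hdpos := deg_real_pos (v := w' ⟨0, by omega⟩) G hdeg
  have hlast : ∀ u : V, (Fin.cons u w' : Fin (k + 3) → V) (Fin.last (k + 2)) = w' (Fin.last (k + 1)) := by
    intro u
    exact cons_mk_succ u w' (by omega : k + 1 < k + 2)
  calc ∑ u ∈ G.neighborFinset (w' ⟨0, by omega⟩) \ {w' ⟨1, by omega⟩},
          qw G (k + 2) (Fin.cons u w') * f ((Fin.cons u w' : Fin (k + 3) → V) (Fin.last (k + 2)))
      = ∑ _u ∈ G.neighborFinset (w' ⟨0, by omega⟩) \ {w' ⟨1, by omega⟩},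
          ((G.degree (w' ⟨0, by omega⟩) : ℝ) - 1)⁻¹ * qw G (k + 1) w' * f (w' (Fin.last (k + 1))) := by
        apply Finset.sum_congr rfl
        intro u _
        rw [qw_cons, hlast]
    _ = ((G.degree (w' ⟨0, by omega⟩) : ℝ) - 1)
          * (((G.degree (w' ⟨0, by omega⟩) : ℝ) - 1)⁻¹ * qw G (k + 1) w' * f (w' (Fin.last (k + 1)))) := by
        rw [Finset.sum_const, nsmul_eq_mul, card_ext G hadj.symm]
    _ = qw G (k + 1) w' * f (w' (Fin.last (k + 1))) := by
        rw [← mul_assoc, ← mul_assoc, mul_inv_cancel₀ (ne_of_gt hdpos), one_mul]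

lemma em_odd (A B : Finset V) (hAB : ∀ u v, G.Adj u v → (u ∈ A ↔ v ∈ B))
    (hBA : ∀ u v, G.Adj u v → (u ∈ B ↔ v ∈ A))
    (hdeg : ∀ v : V, 2 ≤ G.degree v) (f : V → ℝ) (j : ℕ) :
    emg G A (2 * j + 1) f = ∑ u ∈ A, ∑ v ∈ G.neighborFinset u, f v := by
  induction j with
  | zero => exact em_one G A f
  | succ n ih =>
    have e1 : emg G A (2 * n + 3) f = emg G B (2 * n + 2) f := em_step G A B hAB hdeg (2 * n + 1) f
    have e2 : emg G B (2 * n + 2) f = emg G A (2 * n + 1) f := em_step G B A hBA hdeg (2 * n) f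
    calc emg G A (2 * (n + 1) + 1) f = emg G B (2 * n + 2) f := e1
      _ = emg G A (2 * n + 1) f := e2
      _ = _ := ih

lemma em_even (A B : Finset V) (hAB : ∀ u v, G.Adj u v → (u ∈ A ↔ v ∈ B))
    (hBA : ∀ u v, G.Adj u v → (u ∈ B ↔ v ∈ A))
    (hdeg : ∀ v : V, 2 ≤ G.degree v) (f : V → ℝ) (j : ℕ) :
    emg G A (2 * j + 2) f = ∑ u ∈ B, ∑ v ∈ G.neighborFinset u, f v := by
  have e1 : emg G A (2 * j + 2) f = emg G B (2 * j + 1) f := em_step G A B hAB hdeg (2 * j) f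
  rw [e1, em_odd G B A hBA hAB hdeg f j]

/-! ### Bipartite double counting -/

lemma swap_sum (A B : Finset V) (hAB : ∀ u v, G.Adj u v → (u ∈ A ↔ v ∈ B)) (f : V → ℝ) :
    ∑ u ∈ A, ∑ v ∈ G.neighborFinset u, f v = ∑ v ∈ B, (G.degree v : ℝ) * f v := by
  have key : ∀ v : V, (A.filter (fun u => G.Adj u v)) = if v ∈ B then G.neighborFinset v else ∅ := by
    intro v
    split_ifs with hv
    · ext u
      simp only [Finset.mem_filter, SimpleGraph.mem_neighborFinset]
      constructor
      · rintro ⟨_, h⟩; exact h.symm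
      · intro h
        exact ⟨(hAB u v h.symm).mpr hv, h.symm⟩
    · ext u
      simp only [Finset.mem_filter, Finset.notMem_empty, iff_false, not_and]
      intro _ h
      exact hv ((hAB u v h).mp ‹u ∈ A›)
  calc ∑ u ∈ A, ∑ v ∈ G.neighborFinset u, f v
      = ∑ u ∈ A, ∑ v ∈ Finset.univ, if G.Adj u v then f v else 0 := by
        apply Finset.sum_congr rfl
        intro u _
        rw [SimpleGraph.neighborFinset_eq_filter, Finset.sum_filter]
    _ = ∑ v ∈ Finset.univ, ∑ u ∈ A, if G.Adj u v then f v else 0 := Finset.sum_comm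
    _ = ∑ v ∈ Finset.univ, ((A.filter (fun u => G.Adj u v)).card : ℝ) * f v := by
        apply Finset.sum_congr rfl
        intro v _
        rw [← Finset.sum_filter, Finset.sum_const, nsmul_eq_mul]
    _ = ∑ v ∈ Finset.univ, (if v ∈ B then (G.degree v : ℝ) * f v else 0) := by
        apply Finset.sum_congr rfl
        intro v _
        rw [key v]
        split_ifs with hv
        · rw [SimpleGraph.card_neighborFinset_eq_degree]
        · simp
    _ = ∑ v ∈ B, (G.degree v : ℝ) * f v := by
        rw [Finset.sum_ite_mem, Finset.univ_inter]

/-! ### Log-weight sums -/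

lemma logsum_step (S : Finset V) (hdeg : ∀ v : V, 2 ≤ G.degree v) (k : ℕ) :
    ∑ w ∈ NRW G S (k + 2), qw G (k + 2) w * lw G (k + 2) w
      = (∑ w ∈ NRW G S (k + 1), qw G (k + 1) w * lw G (k + 1) w)
        + emg G S (k + 1) (fun v => Real.log ((G.degree v : ℝ) - 1)) := by
  rw [peel_right G S k (fun w => qw G (k + 2) w * lw G (k + 2) w)]
  unfold emg
  rw [← Finset.sum_add_distrib]
  apply Finset.sum_congr rfl
  intro w' hw'
  rw [mem_NRW] at hw'
  have hadj : G.Adj (w' ⟨k, by omega⟩) (w' ⟨k + 1, by omega⟩) := hw'.1.1 k (by omega)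
  have hdpos := deg_real_pos (v := w' ⟨k + 1, by omega⟩) G hdeg
  have hlast : w' (Fin.last (k + 1)) = w' ⟨k + 1, by omega⟩ := rfl
  calc ∑ x ∈ G.neighborFinset (w' ⟨k + 1, by omega⟩) \ {w' ⟨k, by omega⟩},
          qw G (k + 2) (Fin.snoc w' x) * lw G (k + 2) (Fin.snoc w' x)
      = ∑ _x ∈ G.neighborFinset (w' ⟨k + 1, by omega⟩) \ {w' ⟨k, by omega⟩},
          (qw G (k + 1) w' * ((G.degree (w' ⟨k + 1, by omega⟩) : ℝ) - 1)⁻¹)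
            * (lw G (k + 1) w' + Real.log ((G.degree (w' ⟨k + 1, by omega⟩) : ℝ) - 1)) := by
        apply Finset.sum_congr rfl
        intro x _
        rw [qw_snoc, lw_snoc]
    _ = ((G.degree (w' ⟨k + 1, by omega⟩) : ℝ) - 1)
          * ((qw G (k + 1) w' * ((G.degree (w' ⟨k + 1, by omega⟩) : ℝ) - 1)⁻¹)
            * (lw G (k + 1) w' + Real.log ((G.degree (w' ⟨k + 1, by omega⟩) : ℝ) - 1))) := by
        rw [Finset.sum_const, nsmul_eq_mul, card_ext G hadj]
    _ = qw G (k + 1) w' * lw G (k + 1) w'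
          + qw G (k + 1) w' * Real.log ((G.degree (w' (Fin.last (k + 1))) : ℝ) - 1) := by
        rw [hlast]
        field_simp

lemma logsum_formula (A B : Finset V) (hAB : ∀ u v, G.Adj u v → (u ∈ A ↔ v ∈ B))
    (hBA : ∀ u v, G.Adj u v → (u ∈ B ↔ v ∈ A))
    (hdeg : ∀ v : V, 2 ≤ G.degree v) (i : ℕ) :
    ∑ w ∈ NRW G A (2 * i + 2), qw G (2 * i + 2) w * lw G (2 * i + 2) w
      = ((i : ℝ) + 1) * (∑ v ∈ B, (G.degree v : ℝ) * Real.log ((G.degree v : ℝ) - 1))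
        + (i : ℝ) * (∑ v ∈ A, (G.degree v : ℝ) * Real.log ((G.degree v : ℝ) - 1)) := by
  set flog : V → ℝ := fun v => Real.log ((G.degree v : ℝ) - 1) with hflog
  have hodd : ∀ j : ℕ, emg G A (2 * j + 1) flog = ∑ v ∈ B, (G.degree v : ℝ) * flog v := by
    intro j
    rw [em_odd G A B hAB hBA hdeg flog j, swap_sum G A B hAB flog]
  have heven : ∀ j : ℕ, emg G A (2 * j + 2) flog = ∑ v ∈ A, (G.degree v : ℝ) * flog v := by
    intro j
    rw [em_even G A B hAB hBA hdeg flog j, swap_sum G B A hBA flog]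
  induction i with
  | zero =>
    have h1 := logsum_step G A hdeg 0
    have h0 : ∑ w ∈ NRW G A 1, qw G 1 w * lw G 1 w = 0 := by
      apply Finset.sum_eq_zero
      intro w _
      rw [lw_one, mul_zero]
    rw [show 2 * 0 + 2 = 2 from rfl] at *
    rw [h1, h0, hodd 0]
    push_cast
    ring
  | succ n ih =>
    have h1 : ∑ w ∈ NRW G A (2 * n + 4), qw G (2 * n + 4) w * lw G (2 * n + 4) w
        = (∑ w ∈ NRW G A (2 * n + 3), qw G (2 * n + 3) w * lw G (2 * n + 3) w)
          + emg G A (2 * n + 3) flog := logsum_step G A hdeg (2 * n + 2)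
    have h2 : ∑ w ∈ NRW G A (2 * n + 3), qw G (2 * n + 3) w * lw G (2 * n + 3) w
        = (∑ w ∈ NRW G A (2 * n + 2), qw G (2 * n + 2) w * lw G (2 * n + 2) w)
          + emg G A (2 * n + 2) flog := logsum_step G A hdeg (2 * n + 1)
    have e1 : emg G A (2 * n + 3) flog = ∑ v ∈ B, (G.degree v : ℝ) * flog v := hodd (n + 1)
    have e2 : emg G A (2 * n + 2) flog = ∑ v ∈ A, (G.degree v : ℝ) * flog v := heven n
    calc ∑ w ∈ NRW G A (2 * (n + 1) + 2), qw G (2 * (n + 1) + 2) w * lw G (2 * (n + 1) + 2) w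
        = ∑ w ∈ NRW G A (2 * n + 4), qw G (2 * n + 4) w * lw G (2 * n + 4) w := rfl
      _ = (∑ w ∈ NRW G A (2 * n + 2), qw G (2 * n + 2) w * lw G (2 * n + 2) w)
            + (∑ v ∈ A, (G.degree v : ℝ) * flog v) + (∑ v ∈ B, (G.degree v : ℝ) * flog v) := by
          rw [h1, h2, e1, e2]
      _ = _ := by
          rw [ih]
          push_cast
          ring

/-! ### Jensen over walks -/

lemma count_ge (Lf : Finset V) (m : ℕ) (hdeg : ∀ v : V, 2 ≤ G.degree v)
    (hE : (0:ℝ) < ∑ u ∈ Lf, (G.degree u : ℝ))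
    (hmass : ∑ w ∈ NRW G Lf m, qw G m w = ∑ u ∈ Lf, (G.degree u : ℝ)) :
    Real.exp ((∑ w ∈ NRW G Lf m, qw G m w * lw G m w) / (∑ u ∈ Lf, (G.degree u : ℝ)))
      ≤ ((NRW G Lf m).card : ℝ) / (∑ u ∈ Lf, (G.degree u : ℝ)) := by
  have h := convexOn_exp.map_centerMass_le (t := NRW G Lf m) (w := qw G m) (p := lw G m)
    (fun w _ => (qw_pos G hdeg w).le) (by rw [hmass]; exact hE) (fun w _ => Set.mem_univ _)
  unfold Finset.centerMass at h
  simp only [smul_eq_mul, Function.comp] at h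
  rw [hmass] at h
  have hsum : ∑ w ∈ NRW G Lf m, qw G m w * Real.exp (lw G m w)
      = ((NRW G Lf m).card : ℝ) := by
    calc ∑ w ∈ NRW G Lf m, qw G m w * Real.exp (lw G m w)
        = ∑ _w ∈ NRW G Lf m, (1:ℝ) := by
          apply Finset.sum_congr rfl
          intro w _
          rw [exp_lw G hdeg w, mul_inv_cancel₀ (ne_of_gt (qw_pos G hdeg w))]
      _ = ((NRW G Lf m).card : ℝ) := by rw [Finset.sum_const, nsmul_eq_mul, mul_one]
  rw [hsum] at h
  rw [div_eq_inv_mul, div_eq_inv_mul]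
  exact h

/-! ### Relating nE to walk counts -/

lemma sum_nE (L : Finset V) (i : ℕ) :
    ∑ u ∈ L, ∑ v ∈ G.neighborFinset u, nE G (2 * i + 1) u v
      = (NRW G L (2 * i + 2)).card := by
  classical
  have h1 : ∀ u ∈ L, ∀ v : V, nE G (2 * i + 1) u v
      = ((NRW G L (2 * i + 2)).filter (fun w => w 0 = u ∧ w 1 = v)).card := by
    intro u hu v
    rw [nE, Nat.card_eq_fintype_card, Fintype.card_subtype]
    congr 1
    ext w
    simp only [Finset.mem_filter, Finset.mem_univ, true_and, mem_NRW]
    constructor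
    · rintro ⟨hNR, h0, h1v⟩
      exact ⟨⟨hNR, h0 ▸ hu⟩, h0, h1v⟩
    · rintro ⟨⟨hNR, _⟩, h0, h1v⟩
      exact ⟨hNR, h0, h1v⟩
  calc ∑ u ∈ L, ∑ v ∈ G.neighborFinset u, nE G (2*i+1) u v
      = ∑ u ∈ L, ∑ v ∈ G.neighborFinset u, ∑ w ∈ NRW G L (2*i+2),
          (if w 0 = u ∧ w 1 = v then 1 else 0) := by
        apply Finset.sum_congr rfl; intro u hu
        apply Finset.sum_congr rfl; intro v _
        rw [h1 u hu v, Finset.card_filter]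
    _ = ∑ u ∈ L, ∑ w ∈ NRW G L (2*i+2), ∑ v ∈ G.neighborFinset u,
          (if w 0 = u ∧ w 1 = v then 1 else 0) :=
        Finset.sum_congr rfl fun u _ => Finset.sum_comm
    _ = ∑ w ∈ NRW G L (2*i+2), ∑ u ∈ L, ∑ v ∈ G.neighborFinset u,
          (if w 0 = u ∧ w 1 = v then 1 else 0) := Finset.sum_comm
    _ = ∑ _w ∈ NRW G L (2*i+2), 1 := by
        apply Finset.sum_congr rfl
        intro w hw
        rw [mem_NRW] at hw
        obtain ⟨hNR, h0⟩ := hw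
        have hadj : w 1 ∈ G.neighborFinset (w 0) := by
          rw [SimpleGraph.mem_neighborFinset]
          have := hNR.1 0 (by omega)
          simpa using this
        have e1 : ∀ u : V, ∑ v ∈ G.neighborFinset u, (if w 0 = u ∧ w 1 = v then (1:ℕ) else 0)
            = if w 0 = u then (if w 1 ∈ G.neighborFinset u then 1 else 0) else 0 := by
          intro u
          by_cases h : w 0 = u
          · simp only [h, true_and, if_pos rfl]
            rw [Finset.sum_ite_eq]
            simp
          · simp [h]
        rw [Finset.sum_congr rfl (fun u _ => e1 u), Finset.sum_ite_eq]
        simp [h0, hadj]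
    _ = (NRW G L (2*i+2)).card := by
        rw [Finset.card_eq_sum_ones]

end Core

theorem hoory_lemma_a {V : Type*} [Fintype V] [DecidableEq V]
    (G : SimpleGraph V) [DecidableRel G.Adj] (L R : Finset V)
    (hpart : ∀ v : V, (v ∈ L ∧ v ∉ R) ∨ (v ∈ R ∧ v ∉ L))
    (hbip : ∀ u v : V, G.Adj u v → (u ∈ L ∧ v ∈ R) ∨ (u ∈ R ∧ v ∈ L))
    (hmin : 2 ≤ G.minDegree)
    (dL dR : ℝ) (hdL : dL = (G.edgeFinset.card : ℝ) / (L.card : ℝ))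
    (hdR : dR = (G.edgeFinset.card : ℝ) / (R.card : ℝ)) (i : ℕ) (hi : 1 ≤ i) :
    (∑ u ∈ L, ∑ v ∈ G.neighborFinset u, (nE G (2 * i + 1) u v : ℝ)) /
        (G.edgeFinset.card : ℝ) ≥ (dR - 1) ^ (i + 1) * (dL - 1) ^ i := by
  classical
  have hdeg : ∀ v : V, 2 ≤ G.degree v := fun v => le_trans hmin (G.minDegree_le_degree v)
  have hVne : Nonempty V := by
    by_contra h
    rw [not_nonempty_iff] at h
    have h0 : G.minDegree = 0 := by
      simp [SimpleGraph.minDegree, Finset.univ_eq_empty]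
    omega
  have hdisj : ∀ x : V, ¬(x ∈ L ∧ x ∈ R) := by
    intro x hx
    rcases hpart x with ⟨_, h⟩ | ⟨_, h⟩
    · exact h hx.2
    · exact h hx.1
  have hLR : ∀ u v, G.Adj u v → (u ∈ L ↔ v ∈ R) := by
    intro u v huv
    constructor
    · intro hu
      rcases hbip u v huv with ⟨_, hv⟩ | ⟨hu', _⟩
      · exact hv
      · exact absurd ⟨hu, hu'⟩ (hdisj u)
    · intro hv
      rcases hbip u v huv with ⟨hu, _⟩ | ⟨_, hv'⟩
      · exact hu
      · exact absurd ⟨hv', hv⟩ (hdisj v)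
  have hRL : ∀ u v, G.Adj u v → (u ∈ R ↔ v ∈ L) := by
    intro u v huv
    constructor
    · intro hu
      rcases hbip u v huv with ⟨hu', _⟩ | ⟨_, hv⟩
      · exact absurd ⟨hu', hu⟩ (hdisj u)
      · exact hv
    · intro hv
      rcases hbip u v huv with ⟨hu', hv'⟩ | ⟨hu', _⟩
      · exact absurd ⟨hv, hv'⟩ (hdisj v)
      · exact hu'
  -- degree sums
  have hswapLR : ∑ u ∈ L, (G.degree u : ℝ) = ∑ u ∈ R, (G.degree u : ℝ) := by
    have h := swap_sum G L R hLR (fun _ => (1:ℝ))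
    simp only [mul_one] at h
    rw [← h]
    apply Finset.sum_congr rfl
    intro u _
    rw [Finset.sum_const, nsmul_eq_mul, mul_one, SimpleGraph.card_neighborFinset_eq_degree]
  have hdisjLR : Disjoint L R := by
    rw [Finset.disjoint_left]
    intro a ha hb
    exact hdisj a ⟨ha, hb⟩
  have hunion : (Finset.univ : Finset V) = L ∪ R := by
    ext x
    simp only [Finset.mem_univ, true_iff, Finset.mem_union]
    rcases hpart x with ⟨h, _⟩ | ⟨h, _⟩
    · exact Or.inl h
    · exact Or.inr h
  have hsum2 : (∑ u ∈ L, (G.degree u : ℝ)) + (∑ u ∈ R, (G.degree u : ℝ))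
      = 2 * (G.edgeFinset.card : ℝ) := by
    have h := G.sum_degrees_eq_twice_card_edges
    have hsplit : ∑ v ∈ (Finset.univ : Finset V), (G.degree v : ℝ)
        = (∑ u ∈ L, (G.degree u : ℝ)) + (∑ u ∈ R, (G.degree u : ℝ)) := by
      rw [hunion, Finset.sum_union hdisjLR]
    rw [← hsplit]
    push_cast [← h]
    norm_cast
  have hEL : ∑ u ∈ L, (G.degree u : ℝ) = (G.edgeFinset.card : ℝ) := by linarith
  have hER : ∑ u ∈ R, (G.degree u : ℝ) = (G.edgeFinset.card : ℝ) := by linarith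
  have hEpos : (0:ℝ) < (G.edgeFinset.card : ℝ) := by
    have h := G.sum_degrees_eq_twice_card_edges
    have h2 : 2 * Fintype.card V ≤ ∑ v ∈ (Finset.univ : Finset V), G.degree v := by
      calc 2 * Fintype.card V = ∑ _v ∈ (Finset.univ : Finset V), 2 := by
            rw [Finset.sum_const, smul_eq_mul, Finset.card_univ, mul_comm]
        _ ≤ ∑ v ∈ (Finset.univ : Finset V), G.degree v :=
            Finset.sum_le_sum (fun v _ => hdeg v)
    have h3 : 0 < Fintype.card V := Fintype.card_pos
    have h4 : 0 < G.edgeFinset.card := by omega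
    exact_mod_cast h4
  have hRne : R.Nonempty := by
    rw [Finset.nonempty_iff_ne_empty]
    intro h
    rw [h, Finset.sum_empty] at hER
    linarith
  have hLne : L.Nonempty := by
    rw [Finset.nonempty_iff_ne_empty]
    intro h
    rw [h, Finset.sum_empty] at hEL
    linarith
  have hRcard : (0:ℝ) < (R.card : ℝ) := by exact_mod_cast Finset.card_pos.mpr hRne
  have hLcard : (0:ℝ) < (L.card : ℝ) := by exact_mod_cast Finset.card_pos.mpr hLne
  -- average degrees are at least 2
  have hdR2 : 2 ≤ dR := by
    rw [hdR, le_div_iff₀ hRcard, ← hER]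
    calc 2 * (R.card : ℝ) = ∑ _v ∈ R, (2:ℝ) := by rw [Finset.sum_const, nsmul_eq_mul, mul_comm]
      _ ≤ ∑ v ∈ R, (G.degree v : ℝ) := Finset.sum_le_sum (fun v _ => by exact_mod_cast hdeg v)
  have hdL2 : 2 ≤ dL := by
    rw [hdL, le_div_iff₀ hLcard, ← hEL]
    calc 2 * (L.card : ℝ) = ∑ _v ∈ L, (2:ℝ) := by rw [Finset.sum_const, nsmul_eq_mul, mul_comm]
      _ ≤ ∑ v ∈ L, (G.degree v : ℝ) := Finset.sum_le_sum (fun v _ => by exact_mod_cast hdeg v)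
  have hdRpos : (0:ℝ) < dR - 1 := by linarith
  have hdLpos : (0:ℝ) < dL - 1 := by linarith
  -- convexity lower bounds for the log sums
  have hconvR : (G.edgeFinset.card : ℝ) * Real.log (dR - 1)
      ≤ ∑ v ∈ R, (G.degree v : ℝ) * Real.log ((G.degree v : ℝ) - 1) := by
    have h := jensen_deg hRne (fun v => (G.degree v : ℝ)) (fun v _ => by show (2:ℝ) ≤ (G.degree v : ℝ); exact_mod_cast hdeg v)
    rw [hER] at h
    rw [← hdR] at h
    exact h
  have hconvL : (G.edgeFinset.card : ℝ) * Real.log (dL - 1)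
      ≤ ∑ v ∈ L, (G.degree v : ℝ) * Real.log ((G.degree v : ℝ) - 1) := by
    have h := jensen_deg hLne (fun v => (G.degree v : ℝ)) (fun v _ => by show (2:ℝ) ≤ (G.degree v : ℝ); exact_mod_cast hdeg v)
    rw [hEL] at h
    rw [← hdL] at h
    exact h
  -- the count of non-returning walks
  have hmass : ∑ w ∈ NRW G L (2*i+2), qw G (2*i+2) w = ∑ u ∈ L, (G.degree u : ℝ) :=
    sum_qw G L hdeg (2*i+1)
  have hcount := count_ge G L (2*i+2) hdeg (hEL ▸ hEpos) hmass
  have hlog := logsum_formula G L R hLR hRL hdeg i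
  rw [hEL] at hcount hmass
  -- lower bound on the log-sum
  have hlogineq : ((i:ℝ)+1) * Real.log (dR - 1) + (i:ℝ) * Real.log (dL - 1)
      ≤ (∑ w ∈ NRW G L (2*i+2), qw G (2*i+2) w * lw G (2*i+2) w) / (G.edgeFinset.card : ℝ) := by
    rw [hlog, le_div_iff₀ hEpos]
    have hi0 : (0:ℝ) ≤ (i:ℝ) := Nat.cast_nonneg i
    have h1 := mul_le_mul_of_nonneg_left hconvR (by linarith : (0:ℝ) ≤ (i:ℝ)+1)
    have h2 := mul_le_mul_of_nonneg_left hconvL hi0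
    ring_nf
    ring_nf at h1 h2
    linarith
  -- assemble
  have hNval : (∑ u ∈ L, ∑ v ∈ G.neighborFinset u, (nE G (2 * i + 1) u v : ℝ))
      = ((NRW G L (2*i+2)).card : ℝ) := by
    rw [← sum_nE G L i]
    push_cast
    rfl
  rw [ge_iff_le, hNval]
  calc (dR - 1) ^ (i + 1) * (dL - 1) ^ i
      = Real.exp (((i:ℝ)+1) * Real.log (dR - 1) + (i:ℝ) * Real.log (dL - 1)) := by
        rw [Real.exp_add]
        congr 1
        · rw [show ((i:ℝ)+1) = ((i+1 : ℕ) : ℝ) by push_cast; ring, Real.exp_nat_mul,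
            Real.exp_log hdRpos]
        · rw [Real.exp_nat_mul, Real.exp_log hdLpos]
    _ ≤ Real.exp ((∑ w ∈ NRW G L (2*i+2), qw G (2*i+2) w * lw G (2*i+2) w)
          / (G.edgeFinset.card : ℝ)) := Real.exp_le_exp.mpr hlogineq
    _ ≤ ((NRW G L (2*i+2)).card : ℝ) / (G.edgeFinset.card : ℝ) := hcount
end

section
/- Let G = (V_L, V_R, E) be a simple bipartite graph with minimum degree at least 2 and left and right average degrees d_L and d_R. If e⃗ is a uniformly chosen directed edge from V_R to V_L, then for every i ≥ 1, E[n_{2i}(e⃗)] ≥ (d_R-1)^i(d_L-1)^i. -/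
variable {V : Type*}

set_option linter.unusedSectionVars false
set_option maxHeartbeats 1000000

namespace Hoory

open Finset

lemma glog_convex : ConvexOn ℝ (Set.Ici (2:ℝ)) (fun x => x * Real.log (x - 1)) := by
  have hint : interior (Set.Ici (2:ℝ)) = Set.Ioi 2 := interior_Ici
  have hderiv : ∀ x ∈ Set.Ioi (2:ℝ), HasDerivAt (fun x => x * Real.log (x - 1))
      (Real.log (x - 1) + x / (x - 1)) x := by
    intro x hx
    have hx1 : x - 1 ≠ 0 := by simp at hx; nlinarith [hx]
    have h1 : HasDerivAt (fun x : ℝ => x - 1) 1 x := (hasDerivAt_id x).sub_const 1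
    have h2 : HasDerivAt (fun x : ℝ => Real.log (x - 1)) (1 / (x - 1)) x := by
      simpa [Function.comp_def] using (Real.hasDerivAt_log hx1).comp x h1
    have := (hasDerivAt_id x).mul h2
    simpa [Pi.mul_def, div_eq_mul_inv, mul_comm, mul_assoc] using this
  apply MonotoneOn.convexOn_of_deriv (convex_Ici 2)
  · apply ContinuousOn.mul continuousOn_id
    apply ContinuousOn.comp Real.continuousOn_log (by fun_prop)
    intro x hx
    simp at hx ⊢
    nlinarith
  · rw [hint]
    intro x hx
    exact (hderiv x hx).differentiableAt.differentiableWithinAt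
  · rw [hint]
    have hde : ∀ x ∈ Set.Ioi (2:ℝ), deriv (fun x => x * Real.log (x - 1)) x
        = Real.log (x - 1) + x / (x - 1) := fun x hx => (hderiv x hx).deriv
    intro a ha b hb hab
    rw [hde a ha, hde b hb]
    simp only [Set.mem_Ioi] at ha hb
    have ha1 : (1:ℝ) < a - 1 := by linarith
    have hb1 : (1:ℝ) < b - 1 := by linarith
    have key : Real.log (a-1) + 1/(a-1) ≤ Real.log (b-1) + 1/(b-1) := by
      have hlog : Real.log ((a-1)/(b-1)) ≤ (a-1)/(b-1) - 1 :=
        Real.log_le_sub_one_of_pos (by positivity)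
      rw [Real.log_div (by linarith) (by linarith)] at hlog
      have h2 : 1/(a-1) - 1/(b-1) ≤ 1 - (a-1)/(b-1) := by
        have e1 : 1/(a-1) - 1/(b-1) = (b-a)/((a-1)*(b-1)) := by
          field_simp
          try ring
        have e2 : 1 - (a-1)/(b-1) = (b-a)/(b-1) := by field_simp; ring
        rw [e1, e2]
        gcongr <;> nlinarith
      linarith
    have hda : a / (a-1) = 1 + 1/(a-1) := by field_simp; ring
    have hdb : b / (b-1) = 1 + 1/(b-1) := by field_simp; ring
    rw [hda, hdb]
    linarith

lemma sum_degree_side {V : Type*} [Fintype V] [DecidableEq V]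
    (G : SimpleGraph V) [DecidableRel G.Adj] (S : Finset V)
    (hS : ∀ u v : V, G.Adj u v → (u ∈ S ↔ v ∉ S)) :
    ∑ v ∈ S, G.degree v = G.edgeFinset.card := by
  classical
  have : ∑ v ∈ S, G.degree v = (S.sigma (fun v => G.neighborFinset v)).card := by
    rw [Finset.card_sigma]
    rfl
  rw [this]
  apply Finset.card_bij (fun a _ => s(a.1, a.2))
  · rintro ⟨v, u⟩ ha
    simp only [Finset.mem_sigma, SimpleGraph.mem_neighborFinset] at ha
    rw [SimpleGraph.mem_edgeFinset]
    exact ha.2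
  · rintro ⟨v, u⟩ ha ⟨v', u'⟩ ha' h
    simp only [Finset.mem_sigma, SimpleGraph.mem_neighborFinset] at ha ha'
    rw [Sym2.eq_iff] at h
    rcases h with ⟨rfl, rfl⟩ | ⟨rfl, rfl⟩
    · rfl
    · exfalso
      exact ((hS _ _ ha'.2).mp ha'.1) ha.1
  · intro e he
    rw [SimpleGraph.mem_edgeFinset] at he
    induction e with
    | _ a b =>
      have hadj : G.Adj a b := (SimpleGraph.mem_edgeSet G).mp he
      by_cases haS : a ∈ S
      · exact ⟨⟨a, b⟩, by simp [haS, hadj], rfl⟩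
      · have hbS : b ∈ S := by
          by_contra hbS
          exact haS ((hS a b hadj).mpr hbS)
        exact ⟨⟨b, a⟩, by simp [hbS, hadj.symm], Sym2.eq_swap⟩

section Walks

variable {V : Type*} [Fintype V] [DecidableEq V] (G : SimpleGraph V) [DecidableRel G.Adj]
  (R L : Finset V)

noncomputable def WS (m : ℕ) : Finset (Fin (m + 1) → V) := by
  classical exact Finset.univ.filter (fun w => IsNR G m w ∧ w 0 ∈ R)

lemma mem_WS {m : ℕ} (w : Fin (m + 1) → V) : w ∈ WS G R m ↔ IsNR G m w ∧ w 0 ∈ R := by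
  classical
  simp [WS]

def WProd (m : ℕ) (a : V → ℝ) (w : Fin (m + 1) → V) : ℝ :=
  ∏ t : Fin (m + 1), if 1 ≤ t.1 ∧ t.1 < m then a (w t) else 1

noncomputable def Pw (m : ℕ) (w : Fin (m + 1) → V) : ℝ :=
  ((G.edgeFinset.card : ℝ))⁻¹ * WProd m (fun v => ((G.degree v : ℝ) - 1)⁻¹) w

def exts (m : ℕ) (w : Fin (m + 1) → V) : Finset V :=
  (G.neighborFinset (w (Fin.last m))).erase (w ⟨m - 1, by omega⟩)

def Sd (t : ℕ) : Finset V := if t % 2 = 0 then R else L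

lemma fin_congr {n : ℕ} (w : Fin n → V) {j j' : ℕ} (h : j < n) (h' : j' < n) (e : j = j') :
    w ⟨j, h⟩ = w ⟨j', h'⟩ := by subst e; rfl

lemma snoc_mk_lt {m : ℕ} (w : Fin (m + 1) → V) (v : V) (j : ℕ) (h : j < m + 1)
    (h2 : j < m + 2) : (Fin.snoc w v : Fin (m + 2) → V) ⟨j, h2⟩ = w ⟨j, h⟩ := by
  have : (⟨j, h2⟩ : Fin (m + 2)) = Fin.castSucc ⟨j, h⟩ := rfl
  rw [this, Fin.snoc_castSucc]

lemma init_mk {m : ℕ} (w : Fin (m + 2) → V) (j : ℕ) (h : j < m + 1) (h' : j < m + 2) :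
    Fin.init w ⟨j, h⟩ = w ⟨j, h'⟩ := rfl

lemma isNR_succ_iff {m : ℕ} (hm : 1 ≤ m) (w : Fin (m + 2) → V) :
    IsNR G (m + 1) w ↔ IsNR G m (Fin.init w) ∧
      w ⟨m + 1, by omega⟩ ∈ G.neighborFinset (w ⟨m, by omega⟩) ∧
      w ⟨m + 1, by omega⟩ ≠ w ⟨m - 1, by omega⟩ := by
  constructor
  · rintro ⟨h1, h2⟩
    refine ⟨⟨fun j hj => ?_, fun j hj => ?_⟩, ?_, ?_⟩
    · rw [init_mk w j (by omega) (by omega), init_mk w (j+1) (by omega) (by omega)]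
      exact h1 j (by omega)
    · rw [init_mk w j (by omega) (by omega), init_mk w (j+2) (by omega) (by omega)]
      exact h2 j (by omega)
    · rw [SimpleGraph.mem_neighborFinset]
      exact h1 m (by omega)
    · have h2' := h2 (m - 1) (by omega)
      have h3 : w ⟨m - 1 + 2, by omega⟩ = w ⟨m + 1, by omega⟩ := fin_congr w _ _ (by omega)
      exact fun hc => h2' (hc.symm.trans h3.symm)
  · rintro ⟨⟨h1, h2⟩, hadj, hne⟩
    rw [SimpleGraph.mem_neighborFinset] at hadj
    constructor
    · intro j hj
      rcases Nat.lt_or_ge j m with hjm | hjm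
      · have := h1 j hjm
        rwa [init_mk w j (by omega) (by omega), init_mk w (j+1) (by omega) (by omega)] at this
      · have hj' : j = m := by omega
        subst hj'
        exact hadj
    · intro j hj
      rcases Nat.lt_or_ge (j + 2) (m + 1) with hjm | hjm
      · have := h2 j (by omega)
        rwa [init_mk w j (by omega) (by omega), init_mk w (j+2) (by omega) (by omega)] at this
      · have hj' : j = m - 1 := by omega
        subst hj'
        have h3 : w ⟨m - 1 + 2, by omega⟩ = w ⟨m + 1, by omega⟩ := fin_congr w _ _ (by omega)
        rw [h3]
        exact fun hc => hne hc.symm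

lemma mem_WS_succ_iff {m : ℕ} (hm : 1 ≤ m) (w : Fin (m + 2) → V) :
    w ∈ WS G R (m + 1) ↔ Fin.init w ∈ WS G R m ∧
      w (Fin.last (m + 1)) ∈ exts G m (Fin.init w) := by
  rw [mem_WS, mem_WS, isNR_succ_iff G hm w, exts]
  have hlast : (Fin.last (m + 1) : Fin (m + 2)) = ⟨m + 1, by omega⟩ := rfl
  have hlastm : Fin.init w (Fin.last m) = w ⟨m, by omega⟩ := init_mk w m (by omega) (by omega)
  have h0 : Fin.init w 0 = w 0 := rfl
  rw [Finset.mem_erase, hlast, hlastm, h0]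
  rw [init_mk w (m-1) (by omega) (by omega)]
  tauto

lemma snoc_sum {m : ℕ} (hm : 1 ≤ m) (f : (Fin (m + 2) → V) → ℝ) :
    ∑ w ∈ WS G R (m + 1), f w
      = ∑ w ∈ WS G R m, ∑ v ∈ exts G m w, f (Fin.snoc w v) := by
  classical
  rw [← Finset.sum_sigma (WS G R m) (fun w => exts G m w) (fun p => f (Fin.snoc p.1 p.2))]
  apply Finset.sum_nbij' (i := fun w => (⟨Fin.init w, w (Fin.last (m + 1))⟩ :
      Σ _w : Fin (m + 1) → V, V)) (j := fun p => Fin.snoc p.1 p.2)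
  · intro w hw
    rw [mem_WS_succ_iff G R hm w] at hw
    exact Finset.mem_sigma.mpr hw
  · rintro ⟨w, v⟩ hp
    rw [Finset.mem_sigma] at hp
    rw [mem_WS_succ_iff G R hm]
    rw [Fin.init_snoc, Fin.snoc_last]
    exact hp
  · intro w _hw
    simp [Fin.snoc_init_self]
  · rintro ⟨w, v⟩ _hp
    simp [Fin.init_snoc, Fin.snoc_last]
  · intro w _hw
    rw [Fin.snoc_init_self]

lemma wprod_one (a : V → ℝ) (w : Fin 2 → V) : WProd 1 a w = 1 := by
  unfold WProd
  apply Finset.prod_eq_one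
  intro t _
  rw [if_neg (by omega)]

lemma wprod_snoc {m : ℕ} (hm : 1 ≤ m) (a : V → ℝ) (w : Fin (m + 1) → V) (v : V) :
    WProd (m + 1) a (Fin.snoc w v) = WProd m a w * a (w (Fin.last m)) := by
  unfold WProd
  rw [Fin.prod_univ_castSucc (n := m + 1)]
  have h1 : (if 1 ≤ (Fin.last (m+1)).1 ∧ (Fin.last (m+1)).1 < m + 1 then
      a ((Fin.snoc w v : Fin (m+2) → V) (Fin.last (m+1))) else 1) = 1 := by
    rw [if_neg]
    simp
  rw [h1, mul_one]
  have h2 : ∀ t : Fin (m + 1), (if 1 ≤ (Fin.castSucc t).1 ∧ (Fin.castSucc t).1 < m + 1 then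
      a ((Fin.snoc w v : Fin (m+2) → V) (Fin.castSucc t)) else 1)
      = if 1 ≤ t.1 ∧ t.1 < m + 1 then a (w t) else 1 := by
    intro t
    rw [Fin.snoc_castSucc]
    rfl
  rw [Finset.prod_congr rfl (fun t _ => h2 t)]
  rw [Fin.prod_univ_castSucc (n := m)]
  conv_rhs => rw [Fin.prod_univ_castSucc (n := m)]
  have h3 : ∀ t : Fin m, (if 1 ≤ (Fin.castSucc t).1 ∧ (Fin.castSucc t).1 < m + 1 then
      a (w (Fin.castSucc t)) else 1)
      = if 1 ≤ (Fin.castSucc t).1 ∧ (Fin.castSucc t).1 < m then a (w (Fin.castSucc t)) else 1 := by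
    intro t
    have ht : (Fin.castSucc t).1 < m := t.2
    by_cases h : 1 ≤ (Fin.castSucc t).1
    · rw [if_pos ⟨h, by omega⟩, if_pos ⟨h, ht⟩]
    · rw [if_neg (fun hc => h hc.1), if_neg (fun hc => h hc.1)]
  rw [Finset.prod_congr rfl (fun t _ => h3 t)]
  have h4 : (if 1 ≤ (Fin.last m).1 ∧ (Fin.last m).1 < m + 1 then a (w (Fin.last m)) else 1)
      = a (w (Fin.last m)) := by
    rw [if_pos]
    simp only [Fin.val_last]
    omega
  have h5 : (if 1 ≤ (Fin.last m).1 ∧ (Fin.last m).1 < m then a (w (Fin.last m)) else 1) = 1 := by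
    rw [if_neg]
    simp only [Fin.val_last]
    omega
  rw [h4, h5, mul_one]

lemma pw_snoc {m : ℕ} (hm : 1 ≤ m) (w : Fin (m + 1) → V) (v : V) :
    Pw G (m + 1) (Fin.snoc w v)
      = Pw G m w * ((G.degree (w (Fin.last m)) : ℝ) - 1)⁻¹ := by
  unfold Pw
  rw [wprod_snoc hm]
  ring

lemma wprod_pos {m : ℕ} (a : V → ℝ) (ha : ∀ v, 0 < a v) (w : Fin (m + 1) → V) :
    0 < WProd m a w := by
  apply Finset.prod_pos
  intro t _
  by_cases h : 1 ≤ t.1 ∧ t.1 < m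
  · rw [if_pos h]; exact ha _
  · rw [if_neg h]; norm_num

lemma swap_nbr (A B : Finset V) (hAB : ∀ u v : V, G.Adj u v → (u ∈ A ↔ v ∈ B))
    (F : V → V → ℝ) :
    ∑ u ∈ A, ∑ v ∈ G.neighborFinset u, F u v
      = ∑ v ∈ B, ∑ u ∈ G.neighborFinset v, F u v := by
  classical
  have hN : ∀ u : V, G.neighborFinset u = univ.filter (fun v => G.Adj u v) := by
    intro u; ext v; simp
  have expand : ∀ (C : Finset V) (g : V → V → ℝ),
      (∑ u ∈ C, ∑ v ∈ G.neighborFinset u, g u v)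
        = ∑ u : V, ∑ v : V, if u ∈ C ∧ G.Adj u v then g u v else 0 := by
    intro C g
    have h1 : ∀ u : V, (∑ v ∈ G.neighborFinset u, g u v)
        = ∑ v : V, if G.Adj u v then g u v else 0 := by
      intro u; rw [hN u, Finset.sum_filter]
    calc ∑ u ∈ C, ∑ v ∈ G.neighborFinset u, g u v
        = ∑ u ∈ C, ∑ v : V, if G.Adj u v then g u v else 0 :=
          Finset.sum_congr rfl (fun u _ => h1 u)
      _ = ∑ u : V, if u ∈ C then ∑ v : V, (if G.Adj u v then g u v else 0) else 0 := by
          rw [Finset.sum_ite_mem, Finset.univ_inter]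
      _ = ∑ u : V, ∑ v : V, if u ∈ C ∧ G.Adj u v then g u v else 0 := by
          apply Finset.sum_congr rfl
          intro u _
          by_cases h : u ∈ C
          · simp only [h, if_true, true_and]
          · simp [h]
  rw [expand A F, expand B (fun v u => F u v), Finset.sum_comm]
  apply Finset.sum_congr rfl
  intro v _
  apply Finset.sum_congr rfl
  intro u _
  apply if_congr _ rfl rfl
  constructor
  · rintro ⟨hu, hadj⟩; exact ⟨(hAB u v hadj).mp hu, hadj.symm⟩
  · rintro ⟨hv, hadj⟩; exact ⟨(hAB u v hadj.symm).mpr hv, hadj.symm⟩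

lemma prev_mem_nbr {m : ℕ} (hm : 1 ≤ m) {w : Fin (m + 1) → V} (hw : w ∈ WS G R m) :
    w ⟨m - 1, by omega⟩ ∈ G.neighborFinset (w (Fin.last m)) := by
  rw [mem_WS] at hw
  obtain ⟨⟨h1, _⟩, _⟩ := hw
  rw [SimpleGraph.mem_neighborFinset]
  have hadj := h1 (m - 1) (by omega)
  have h3 : w ⟨m - 1 + 1, by omega⟩ = w (Fin.last m) := fin_congr w _ _ (by omega)
  exact (h3 ▸ hadj).symm

lemma card_exts {m : ℕ} (hm : 1 ≤ m) {w : Fin (m + 1) → V} (hw : w ∈ WS G R m) :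
    (exts G m w).card = G.degree (w (Fin.last m)) - 1 := by
  rw [exts, Finset.card_erase_of_mem (prev_mem_nbr G R hm hw),
    SimpleGraph.card_neighborFinset_eq_degree]

lemma card_exts_cast {m : ℕ} (hdeg : ∀ v : V, 2 ≤ G.degree v) (hm : 1 ≤ m)
    {w : Fin (m + 1) → V} (hw : w ∈ WS G R m) :
    ((exts G m w).card : ℝ) = (G.degree (w (Fin.last m)) : ℝ) - 1 := by
  rw [card_exts G R hm hw, Nat.cast_sub (by have := hdeg (w (Fin.last m)); omega)]
  norm_num

lemma sd_adj {m : ℕ} (hm : 1 ≤ m)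
    (hRL : ∀ u v : V, G.Adj u v → (u ∈ R ↔ v ∈ L))
    (hLR : ∀ u v : V, G.Adj u v → (u ∈ L ↔ v ∈ R)) :
    ∀ u v : V, G.Adj u v → (u ∈ Sd R L (m - 1) ↔ v ∈ Sd R L m) := by
  intro u v hadj
  unfold Sd
  by_cases hE : m % 2 = 0
  · have h1 : ¬ ((m - 1) % 2 = 0) := by omega
    rw [if_neg h1, if_pos hE]
    exact hLR u v hadj
  · have h1 : (m - 1) % 2 = 0 := by omega
    rw [if_pos h1, if_neg hE]
    exact hRL u v hadj

lemma ws_one_sum (g : V → V → ℝ) :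
    ∑ w ∈ WS G R 1, g (w 0) (w 1) = ∑ u ∈ R, ∑ v ∈ G.neighborFinset u, g u v := by
  classical
  rw [← Finset.sum_sigma R (fun u => G.neighborFinset u) (fun p => g p.1 p.2)]
  apply Finset.sum_nbij' (i := fun w => (⟨w 0, w 1⟩ : Σ _u : V, V))
    (j := fun p => ![p.1, p.2])
  · intro w hw
    rw [mem_WS] at hw
    obtain ⟨⟨h1, _⟩, h0⟩ := hw
    refine Finset.mem_sigma.mpr ⟨h0, ?_⟩
    rw [SimpleGraph.mem_neighborFinset]
    exact h1 0 (by omega)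
  · rintro ⟨u, v⟩ hp
    rw [Finset.mem_sigma, SimpleGraph.mem_neighborFinset] at hp
    rw [mem_WS]
    refine ⟨⟨fun j hj => ?_, fun j hj => by omega⟩, by simpa using hp.1⟩
    have hj0 : j = 0 := by omega
    subst hj0
    simpa using hp.2
  · intro w _hw
    funext t
    fin_cases t <;> simp
  · rintro ⟨u, v⟩ _hp
    simp
  · intro w _hw
    rfl

lemma M2 {m : ℕ} (hm : 1 ≤ m)
    (hdeg : ∀ v : V, 2 ≤ G.degree v)
    (hRL : ∀ u v : V, G.Adj u v → (u ∈ R ↔ v ∈ L))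
    (hLR : ∀ u v : V, G.Adj u v → (u ∈ L ↔ v ∈ R)) :
    ∀ f : V → V → ℝ,
    ∑ w ∈ WS G R m, Pw G m w * f (w ⟨m - 1, by omega⟩) (w (Fin.last m))
      = ((G.edgeFinset.card : ℝ))⁻¹ *
          ∑ u ∈ Sd R L (m - 1), ∑ v ∈ G.neighborFinset u, f u v := by
  induction m, hm using Nat.le_induction with
  | base =>
    intro f
    have hPw : ∀ w : Fin 2 → V, Pw G 1 w = ((G.edgeFinset.card : ℝ))⁻¹ := by
      intro w
      unfold Pw
      rw [wprod_one, mul_one]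
    calc ∑ w ∈ WS G R 1, Pw G 1 w * f (w ⟨0, by omega⟩) (w (Fin.last 1))
        = ∑ w ∈ WS G R 1, ((G.edgeFinset.card : ℝ))⁻¹ * f (w 0) (w 1) := by
          apply Finset.sum_congr rfl
          intro w _
          rw [hPw w]
          rfl
      _ = ((G.edgeFinset.card : ℝ))⁻¹ * ∑ w ∈ WS G R 1, f (w 0) (w 1) := by
          rw [Finset.mul_sum]
      _ = _ := by
          rw [ws_one_sum]
          rfl
  | succ m hm ih =>
    intro f
    have hstep := snoc_sum G R hm (fun w' => Pw G (m + 1) w' *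
      f (w' ⟨m + 1 - 1, by omega⟩) (w' (Fin.last (m + 1))))
    rw [hstep]
    have hinner : ∀ w ∈ WS G R m,
        (∑ v ∈ exts G m w, Pw G (m + 1) (Fin.snoc w v) *
          f ((Fin.snoc w v : Fin (m+2) → V) ⟨m + 1 - 1, by omega⟩)
            ((Fin.snoc w v : Fin (m+2) → V) (Fin.last (m + 1))))
        = Pw G m w * ((fun u u' => ((G.degree u' : ℝ) - 1)⁻¹ *
            ((∑ v' ∈ G.neighborFinset u', f u' v') - f u' u))
              (w ⟨m - 1, by omega⟩) (w (Fin.last m))) := by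
      intro w hw
      have hsnoc_mid : ∀ v : V, (Fin.snoc w v : Fin (m+2) → V) ⟨m + 1 - 1, by omega⟩
          = w (Fin.last m) := fun v =>
        (snoc_mk_lt w v (m + 1 - 1) (by omega) (by omega)).trans (fin_congr w _ _ (by omega))
      have hsnoc_last : ∀ v : V, (Fin.snoc w v : Fin (m+2) → V) (Fin.last (m + 1)) = v :=
        fun v => Fin.snoc_last _ _
      calc (∑ v ∈ exts G m w, Pw G (m + 1) (Fin.snoc w v) *
          f ((Fin.snoc w v : Fin (m+2) → V) ⟨m + 1 - 1, by omega⟩)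
            ((Fin.snoc w v : Fin (m+2) → V) (Fin.last (m + 1))))
          = ∑ v ∈ exts G m w, Pw G m w * ((G.degree (w (Fin.last m)) : ℝ) - 1)⁻¹ *
              f (w (Fin.last m)) v := by
            apply Finset.sum_congr rfl
            intro v _
            rw [pw_snoc G hm, hsnoc_mid v, hsnoc_last v]
        _ = Pw G m w * (((G.degree (w (Fin.last m)) : ℝ) - 1)⁻¹ *
              ∑ v ∈ exts G m w, f (w (Fin.last m)) v) := by
            rw [Finset.mul_sum, Finset.mul_sum]
            apply Finset.sum_congr rfl
            intro v _
            ring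
        _ = _ := by
            congr 2
            rw [exts, Finset.sum_erase_eq_sub (prev_mem_nbr G R hm hw)]
    have hIH := ih (fun u u' => ((G.degree u' : ℝ) - 1)⁻¹ *
      ((∑ v' ∈ G.neighborFinset u', f u' v') - f u' u))
    rw [Finset.sum_congr rfl hinner, hIH]
    simp only [Nat.add_sub_cancel]
    congr 1
    rw [swap_nbr G (Sd R L (m - 1)) (Sd R L m) (sd_adj G R L hm hRL hLR)]
    have : ∀ u' ∈ Sd R L m,
        (∑ u ∈ G.neighborFinset u', ((G.degree u' : ℝ) - 1)⁻¹ *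
          ((∑ v' ∈ G.neighborFinset u', f u' v') - f u' u))
        = ∑ v ∈ G.neighborFinset u', f u' v := by
      intro u' _
      rw [← Finset.mul_sum, Finset.sum_sub_distrib, Finset.sum_const,
        SimpleGraph.card_neighborFinset_eq_degree]
      have hd : (2 : ℕ) ≤ G.degree u' := hdeg u'
      have hne : ((G.degree u' : ℝ) - 1) ≠ 0 := by
        have : (2 : ℝ) ≤ (G.degree u' : ℝ) := by exact_mod_cast hd
        linarith
      rw [nsmul_eq_mul]
      field_simp
    rw [Finset.sum_congr rfl this]

lemma MARG {t : ℕ} (ht1 : 1 ≤ t)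
    (hdeg : ∀ v : V, 2 ≤ G.degree v)
    (hRL : ∀ u v : V, G.Adj u v → (u ∈ R ↔ v ∈ L))
    (hLR : ∀ u v : V, G.Adj u v → (u ∈ L ↔ v ∈ R))
    {m : ℕ} (htm : t ≤ m) (h : V → ℝ) :
    ∑ w ∈ WS G R m, Pw G m w * h (w ⟨t, by omega⟩)
      = ((G.edgeFinset.card : ℝ))⁻¹ * ∑ v ∈ Sd R L t, (G.degree v : ℝ) * h v := by
  induction m, htm using Nat.le_induction with
  | base =>
    have := M2 G R L ht1 hdeg hRL hLR (fun _u v => h v)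
    have hlast : ∀ w : Fin (t + 1) → V, w (Fin.last t) = w ⟨t, by omega⟩ := fun w => rfl
    simp only [hlast] at this
    rw [this]
    congr 1
    rw [swap_nbr G (Sd R L (t - 1)) (Sd R L t) (sd_adj G R L ht1 hRL hLR)]
    apply Finset.sum_congr rfl
    intro v _
    rw [Finset.sum_const, SimpleGraph.card_neighborFinset_eq_degree, nsmul_eq_mul]
  | succ m hm ih =>
    have hmm1 : 1 ≤ m := le_trans ht1 hm
    rw [snoc_sum G R hmm1 (fun w' => Pw G (m + 1) w' * h (w' ⟨t, by omega⟩))]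
    rw [← ih]
    apply Finset.sum_congr rfl
    intro w hw
    have hsnoc_t : ∀ v : V, (Fin.snoc w v : Fin (m+2) → V) ⟨t, by omega⟩
        = w ⟨t, by omega⟩ := fun v => snoc_mk_lt w v t (by omega) (by omega)
    calc ∑ v ∈ exts G m w, Pw G (m + 1) (Fin.snoc w v) *
          h ((Fin.snoc w v : Fin (m+2) → V) ⟨t, by omega⟩)
        = ∑ v ∈ exts G m w, Pw G m w * ((G.degree (w (Fin.last m)) : ℝ) - 1)⁻¹ *
            h (w ⟨t, by omega⟩) := by
          apply Finset.sum_congr rfl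
          intro v _
          rw [pw_snoc G hmm1, hsnoc_t v]
      _ = ((exts G m w).card : ℝ) * (Pw G m w * ((G.degree (w (Fin.last m)) : ℝ) - 1)⁻¹ *
            h (w ⟨t, by omega⟩)) := by
          rw [Finset.sum_const, nsmul_eq_mul]
      _ = Pw G m w * h (w ⟨t, by omega⟩) := by
          rw [card_exts_cast G R hdeg hmm1 hw]
          have hd : (2 : ℕ) ≤ G.degree (w (Fin.last m)) := hdeg _
          have hne : ((G.degree (w (Fin.last m)) : ℝ) - 1) ≠ 0 := by
            have : (2 : ℝ) ≤ (G.degree (w (Fin.last m)) : ℝ) := by exact_mod_cast hd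
            linarith
          field_simp

lemma ws_card {k : ℕ} :
    ∑ v ∈ R, ∑ u ∈ G.neighborFinset v, nE G k v u = (WS G R (k + 1)).card := by
  classical
  have hfib : ∀ v ∈ R, ∀ u ∈ G.neighborFinset v, nE G k v u
      = ((WS G R (k+1)).filter (fun w => w 0 = v ∧ w 1 = u)).card := by
    intro v hv u _hu
    rw [nE, Nat.card_eq_fintype_card, Fintype.card_subtype]
    congr 1
    ext w
    simp only [Finset.mem_filter, Finset.mem_univ, true_and, mem_WS]
    constructor
    · rintro ⟨hnr, h0, h1⟩
      exact ⟨⟨hnr, h0 ▸ hv⟩, h0, h1⟩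
    · rintro ⟨⟨hnr, _⟩, h0, h1⟩
      exact ⟨hnr, h0, h1⟩
  rw [Finset.sum_congr rfl (fun v hv => Finset.sum_congr rfl (fun u hu => hfib v hv u hu))]
  rw [← Finset.sum_sigma R (fun v => G.neighborFinset v)
    (fun p => ((WS G R (k+1)).filter (fun w => w 0 = p.1 ∧ w 1 = p.2)).card)]
  have H : ∀ w ∈ WS G R (k+1),
      (⟨w 0, w 1⟩ : Σ _v : V, V) ∈ R.sigma (fun v => G.neighborFinset v) := by
    intro w hw
    rw [mem_WS] at hw
    obtain ⟨⟨h1, _⟩, h0⟩ := hw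
    refine Finset.mem_sigma.mpr ⟨h0, ?_⟩
    rw [SimpleGraph.mem_neighborFinset]
    have h0e : (0 : Fin (k+2)) = ⟨0, by omega⟩ := by ext; simp
    have h1e : (1 : Fin (k+2)) = ⟨1, by omega⟩ := by ext; simp
    rw [h0e, h1e]
    exact h1 0 (by omega)
  rw [Finset.card_eq_sum_card_fiberwise H]
  apply Finset.sum_congr rfl
  rintro ⟨v, u⟩ _
  congr 1
  ext w
  simp only [Finset.mem_filter]
  constructor
  · rintro ⟨hw, h0, h1⟩
    exact ⟨hw, by rw [h0, h1]⟩
  · rintro ⟨hw, hvu⟩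
    obtain ⟨h0, h1⟩ := Sigma.mk.inj_iff.mp hvu
    exact ⟨hw, h0, eq_of_heq h1⟩

end Walks

lemma jensen_side {V : Type*} [Fintype V] [DecidableEq V] (G : SimpleGraph V)
    [DecidableRel G.Adj] (hdeg : ∀ v : V, 2 ≤ G.degree v) (S : Finset V) (hSne : S.Nonempty)
    (hES : ∑ v ∈ S, (G.degree v : ℝ) = (G.edgeFinset.card : ℝ)) (d : ℝ)
    (hd : d = (G.edgeFinset.card : ℝ) / (S.card : ℝ)) :
    Real.log (d - 1) ≤ ((G.edgeFinset.card : ℝ))⁻¹ *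
      ∑ v ∈ S, (G.degree v : ℝ) * Real.log ((G.degree v : ℝ) - 1) := by
  have hn : (0:ℝ) < (S.card : ℝ) := by exact_mod_cast Finset.card_pos.mpr hSne
  have hsum2 : 2 * (S.card:ℝ) ≤ ∑ v ∈ S, (G.degree v : ℝ) := by
    have hh : ∀ v ∈ S, (2:ℝ) ≤ (G.degree v : ℝ) := fun v _ => by exact_mod_cast hdeg v
    calc 2 * (S.card:ℝ) = ∑ _v ∈ S, (2:ℝ) := by
          rw [Finset.sum_const, nsmul_eq_mul]; ring
      _ ≤ _ := Finset.sum_le_sum hh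
  have hEpos : (0:ℝ) < (G.edgeFinset.card : ℝ) := by nlinarith [hES]
  have hd2 : (2:ℝ) ≤ d := by
    rw [hd, le_div_iff₀ hn]
    nlinarith [hES]
  have hw1 : ∑ _v ∈ S, ((S.card:ℝ))⁻¹ = 1 := by
    rw [Finset.sum_const, nsmul_eq_mul]
    field_simp
  have hj := glog_convex.map_sum_le (t := S) (w := fun _ => ((S.card:ℝ))⁻¹)
    (p := fun v => (G.degree v : ℝ)) (fun _ _ => by positivity) hw1
    (fun v _ => by
      simp only [Set.mem_Ici]
      show (2:ℝ) ≤ (G.degree v : ℝ)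
      exact_mod_cast hdeg v)
  simp only [smul_eq_mul] at hj
  have hsum_eq : ∑ v ∈ S, ((S.card:ℝ))⁻¹ * (G.degree v : ℝ) = d := by
    rw [← Finset.mul_sum, hES, hd]
    ring
  rw [hsum_eq, ← Finset.mul_sum] at hj
  have hSd : (S.card : ℝ) * d = (G.edgeFinset.card : ℝ) := by
    rw [hd]
    field_simp
  have h2 := mul_le_mul_of_nonneg_left hj hn.le
  rw [← mul_assoc, ← mul_assoc, mul_inv_cancel₀ (ne_of_gt hn), one_mul] at h2
  have h3 : (G.edgeFinset.card:ℝ) * Real.log (d-1)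
      ≤ ∑ v ∈ S, (G.degree v:ℝ) * Real.log ((G.degree v:ℝ)-1) := by
    calc (G.edgeFinset.card:ℝ) * Real.log (d-1) = (S.card:ℝ) * d * Real.log (d-1) := by
          rw [← hSd]
      _ ≤ _ := h2
  rw [inv_mul_eq_div, le_div_iff₀ hEpos]
  linarith [h3]

lemma prod_cc (dR dL : ℝ) (i : ℕ) :
    ∏ n ∈ Finset.Ico 1 (2*i+1), ((if n % 2 = 0 then dR else dL) - 1)
      = (dR-1)^i * (dL-1)^i := by
  induction i with
  | zero => simp
  | succ k ih =>
    have h1 : 2*(k+1)+1 = (2*k+1) + 1 + 1 := by ring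
    rw [h1, Finset.prod_Ico_succ_top (by omega), Finset.prod_Ico_succ_top (by omega), ih]
    have e1 : ¬ ((2*k+1) % 2 = 0) := by omega
    have e2 : (2*k+1+1) % 2 = 0 := by omega
    rw [if_neg e1, if_pos e2]
    ring

end Hoory

open Finset Hoory in
theorem hoory_lemma_b {V : Type*} [Fintype V] [DecidableEq V]
    (G : SimpleGraph V) [DecidableRel G.Adj] (L R : Finset V)
    (hpart : ∀ v : V, (v ∈ L ∧ v ∉ R) ∨ (v ∈ R ∧ v ∉ L))
    (hbip : ∀ u v : V, G.Adj u v → (u ∈ L ∧ v ∈ R) ∨ (u ∈ R ∧ v ∈ L))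
    (hmin : 2 ≤ G.minDegree)
    (dL dR : ℝ) (hdL : dL = (G.edgeFinset.card : ℝ) / (L.card : ℝ))
    (hdR : dR = (G.edgeFinset.card : ℝ) / (R.card : ℝ)) (i : ℕ) (hi : 1 ≤ i) :
    (∑ v ∈ R, ∑ u ∈ G.neighborFinset v, (nE G (2 * i) v u : ℝ)) /
        (G.edgeFinset.card : ℝ) ≥ (dR - 1) ^ i * (dL - 1) ^ i := by
  classical
  have hdeg : ∀ v : V, 2 ≤ G.degree v := fun v => le_trans hmin (G.minDegree_le_degree v)
  have hD2 : ∀ v : V, (2:ℝ) ≤ (G.degree v : ℝ) := fun v => by exact_mod_cast hdeg v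
  have hD0 : ∀ v : V, (0:ℝ) < (G.degree v : ℝ) - 1 := fun v => by linarith [hD2 v]
  have hRL : ∀ u v : V, G.Adj u v → (u ∈ R ↔ v ∈ L) := by
    intro u v h
    rcases hbip u v h with ⟨hu, hv⟩ | ⟨hu, hv⟩ <;>
      rcases hpart u with ⟨h1, h2⟩ | ⟨h1, h2⟩ <;>
      rcases hpart v with ⟨h3, h4⟩ | ⟨h3, h4⟩ <;>
      constructor <;> intro hx <;> tauto
  have hLR : ∀ u v : V, G.Adj u v → (u ∈ L ↔ v ∈ R) := by
    intro u v h
    rcases hbip u v h with ⟨hu, hv⟩ | ⟨hu, hv⟩ <;>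
      rcases hpart u with ⟨h1, h2⟩ | ⟨h1, h2⟩ <;>
      rcases hpart v with ⟨h3, h4⟩ | ⟨h3, h4⟩ <;>
      constructor <;> intro hx <;> tauto
  have hSideR : ∀ u v : V, G.Adj u v → (u ∈ R ↔ v ∉ R) := by
    intro u v h
    rw [hRL u v h]
    rcases hpart v with ⟨h1, h2⟩ | ⟨h1, h2⟩ <;> constructor <;> intro hx <;> tauto
  have hSideL : ∀ u v : V, G.Adj u v → (u ∈ L ↔ v ∉ L) := by
    intro u v h
    rw [hLR u v h]
    rcases hpart v with ⟨h1, h2⟩ | ⟨h1, h2⟩ <;> constructor <;> intro hx <;> tauto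
  have hER : ∑ v ∈ R, G.degree v = G.edgeFinset.card := sum_degree_side G R hSideR
  have hEL : ∑ v ∈ L, G.degree v = G.edgeFinset.card := sum_degree_side G L hSideL
  have hERr : ∑ v ∈ R, (G.degree v : ℝ) = (G.edgeFinset.card : ℝ) := by
    exact_mod_cast congrArg (Nat.cast (R := ℝ)) hER
  have hELr : ∑ v ∈ L, (G.degree v : ℝ) = (G.edgeFinset.card : ℝ) := by
    exact_mod_cast congrArg (Nat.cast (R := ℝ)) hEL
  have hVne : Nonempty V := by
    by_contra hno
    rw [not_nonempty_iff] at hno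
    have : G.minDegree = 0 := by
      simp [SimpleGraph.minDegree, Finset.univ_eq_empty]
    omega
  obtain ⟨v0⟩ := hVne
  have hNv0 : (G.neighborFinset v0).Nonempty := by
    rw [← Finset.card_pos, SimpleGraph.card_neighborFinset_eq_degree]
    have := hdeg v0
    omega
  obtain ⟨u0, hu0⟩ := hNv0
  have hadj0 : G.Adj v0 u0 := by rwa [SimpleGraph.mem_neighborFinset] at hu0
  have hEpos : 0 < G.edgeFinset.card := by
    rw [Finset.card_pos]
    exact ⟨s(v0, u0), SimpleGraph.mem_edgeFinset.mpr hadj0⟩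
  have hEposR : (0:ℝ) < (G.edgeFinset.card : ℝ) := by exact_mod_cast hEpos
  have hLRne : L.Nonempty ∧ R.Nonempty := by
    rcases hbip v0 u0 hadj0 with ⟨h1, h2⟩ | ⟨h1, h2⟩
    exacts [⟨⟨v0, h1⟩, ⟨u0, h2⟩⟩, ⟨⟨u0, h2⟩, ⟨v0, h1⟩⟩]
  have hcardL : (0:ℝ) < (L.card : ℝ) := by exact_mod_cast Finset.card_pos.mpr hLRne.1
  have hcardR : (0:ℝ) < (R.card : ℝ) := by exact_mod_cast Finset.card_pos.mpr hLRne.2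
  have hdL2 : (2:ℝ) ≤ dL := by
    rw [hdL, le_div_iff₀ hcardL]
    have h2 : ∑ _v ∈ L, (2:ℝ) ≤ ∑ v ∈ L, (G.degree v : ℝ) :=
      Finset.sum_le_sum (fun v _ => hD2 v)
    rw [Finset.sum_const, nsmul_eq_mul] at h2
    rw [← hELr]
    linarith
  have hdR2 : (2:ℝ) ≤ dR := by
    rw [hdR, le_div_iff₀ hcardR]
    have h2 : ∑ _v ∈ R, (2:ℝ) ≤ ∑ v ∈ R, (G.degree v : ℝ) :=
      Finset.sum_le_sum (fun v _ => hD2 v)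
    rw [Finset.sum_const, nsmul_eq_mul] at h2
    rw [← hERr]
    linarith
  -- Step A : the numerator counts walks
  have hnum : (∑ v ∈ R, ∑ u ∈ G.neighborFinset v, (nE G (2*i) v u : ℝ))
      = ((WS G R (2*i+1)).card : ℝ) := by
    exact_mod_cast congrArg (Nat.cast (R := ℝ)) (ws_card G R (k := 2*i))
  -- Step B : pointwise product identity
  have hPX : ∀ w ∈ WS G R (2*i+1),
      Pw G (2*i+1) w * WProd (2*i+1) (fun v => (G.degree v : ℝ) - 1) w
        = ((G.edgeFinset.card : ℝ))⁻¹ := by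
    intro w _
    have hcancel : WProd (2*i+1) (fun v => ((G.degree v : ℝ) - 1)⁻¹) w *
        WProd (2*i+1) (fun v => (G.degree v : ℝ) - 1) w = 1 := by
      unfold WProd
      rw [← Finset.prod_mul_distrib]
      apply Finset.prod_eq_one
      intro t _
      by_cases h : 1 ≤ t.1 ∧ t.1 < 2*i+1
      · rw [if_pos h, if_pos h, inv_mul_cancel₀ (ne_of_gt (hD0 (w t)))]
      · rw [if_neg h, if_neg h, mul_one]
    unfold Pw
    rw [mul_assoc, hcancel, mul_one]
  have hsum_card : ∑ w ∈ WS G R (2*i+1),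
      Pw G (2*i+1) w * WProd (2*i+1) (fun v => (G.degree v : ℝ) - 1) w
        = ((WS G R (2*i+1)).card : ℝ) * ((G.edgeFinset.card : ℝ))⁻¹ := by
    rw [Finset.sum_congr rfl hPX, Finset.sum_const, nsmul_eq_mul]
  -- total probability
  have hSd0 : Sd R L (2*i+1-1) = R := by
    unfold Sd
    rw [if_pos (by omega)]
  have hP1 : ∑ w ∈ WS G R (2*i+1), Pw G (2*i+1) w = 1 := by
    have h := M2 G R L (m := 2*i+1) (by omega) hdeg hRL hLR (fun _ _ => (1:ℝ))
    simp only [mul_one] at h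
    rw [h, hSd0]
    have hin : ∀ u ∈ R, (∑ _v ∈ G.neighborFinset u, (1:ℝ)) = (G.degree u : ℝ) := by
      intro u _
      rw [Finset.sum_const, nsmul_eq_mul, mul_one, SimpleGraph.card_neighborFinset_eq_degree]
    rw [Finset.sum_congr rfl hin, hERr, inv_mul_cancel₀ (ne_of_gt hEposR)]
  have hPnn : ∀ w ∈ WS G R (2*i+1), 0 ≤ Pw G (2*i+1) w := by
    intro w _
    unfold Pw
    exact mul_nonneg (inv_nonneg.mpr hEposR.le)
      (wprod_pos _ (fun v => inv_pos.mpr (hD0 v)) w).le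
  have hXnn : ∀ w ∈ WS G R (2*i+1), 0 ≤ WProd (2*i+1) (fun v => (G.degree v : ℝ) - 1) w :=
    fun w _ => (wprod_pos _ hD0 w).le
  have hamgm := Real.geom_mean_le_arith_mean_weighted (WS G R (2*i+1)) (Pw G (2*i+1))
    (WProd (2*i+1) (fun v => (G.degree v : ℝ) - 1)) hPnn hP1 hXnn
  -- Step D : GM as a double product
  have hgm_eq : (∏ w ∈ WS G R (2*i+1),
      (WProd (2*i+1) (fun v => (G.degree v : ℝ) - 1) w) ^ (Pw G (2*i+1) w))
      = ∏ t : Fin (2*i+2), ∏ w ∈ WS G R (2*i+1),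
          (if 1 ≤ t.1 ∧ t.1 < 2*i+1 then (G.degree (w t) : ℝ) - 1 else 1)
            ^ (Pw G (2*i+1) w) := by
    rw [← Finset.prod_comm]
    apply Finset.prod_congr rfl
    intro w _
    unfold WProd
    rw [← Real.finset_prod_rpow _ _ ?_ _]
    intro t _
    by_cases h : 1 ≤ t.1 ∧ t.1 < 2*i+1
    · rw [if_pos h]; exact (hD0 _).le
    · rw [if_neg h]; norm_num
  -- target constants
  set cc : ℕ → ℝ := fun n => if 1 ≤ n ∧ n < 2*i+1 then (if n % 2 = 0 then dR else dL) - 1 else 1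
    with hcc
  have hcc_nn : ∀ n : ℕ, 0 ≤ cc n := by
    intro n
    have e : cc n = if 1 ≤ n ∧ n < 2*i+1 then (if n % 2 = 0 then dR else dL) - 1 else 1 := by
      rw [hcc]
    rw [e]
    by_cases h : 1 ≤ n ∧ n < 2*i+1
    · rw [if_pos h]
      by_cases hp : n % 2 = 0
      · rw [if_pos hp]; linarith
      · rw [if_neg hp]; linarith
    · rw [if_neg h]; norm_num
  -- per-position bound
  have hbound : ∀ t : Fin (2*i+2), cc t.1 ≤ ∏ w ∈ WS G R (2*i+1),
      (if 1 ≤ t.1 ∧ t.1 < 2*i+1 then (G.degree (w t) : ℝ) - 1 else 1)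
        ^ (Pw G (2*i+1) w) := by
    intro t
    have e : cc t.1 = if 1 ≤ t.1 ∧ t.1 < 2*i+1 then (if t.1 % 2 = 0 then dR else dL) - 1 else 1 := by
      rw [hcc]
    rw [e]
    by_cases h : 1 ≤ t.1 ∧ t.1 < 2*i+1
    · have hrw : ∀ w ∈ WS G R (2*i+1),
          (if 1 ≤ t.1 ∧ t.1 < 2*i+1 then (G.degree (w t) : ℝ) - 1 else 1) ^ (Pw G (2*i+1) w)
            = ((G.degree (w t) : ℝ) - 1) ^ (Pw G (2*i+1) w) := fun w _ => by rw [if_pos h]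
      rw [Finset.prod_congr rfl hrw, if_pos h]
      set d : ℝ := if t.1 % 2 = 0 then dR else dL with hdd
      have hd2 : (2:ℝ) ≤ d := by
        rw [hdd]
        by_cases hp : t.1 % 2 = 0
        · rw [if_pos hp]; exact hdR2
        · rw [if_neg hp]; exact hdL2
      have hApos : 0 < ∏ w ∈ WS G R (2*i+1), ((G.degree (w t) : ℝ) - 1) ^ (Pw G (2*i+1) w) :=
        Finset.prod_pos (fun w _ => Real.rpow_pos_of_pos (hD0 _) _)
      have hlogA : Real.log (∏ w ∈ WS G R (2*i+1),
          ((G.degree (w t) : ℝ) - 1) ^ (Pw G (2*i+1) w))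
          = ∑ w ∈ WS G R (2*i+1), Pw G (2*i+1) w * Real.log ((G.degree (w t) : ℝ) - 1) := by
        rw [Real.log_prod (fun w _ => ne_of_gt (Real.rpow_pos_of_pos (hD0 _) _))]
        apply Finset.sum_congr rfl
        intro w _
        rw [Real.log_rpow (hD0 _)]
      have hmarg := MARG G R L (t := t.1) h.1 hdeg hRL hLR (m := 2*i+1) (by omega)
        (fun v => Real.log ((G.degree v : ℝ) - 1))
      have hmarg' : ∑ w ∈ WS G R (2*i+1), Pw G (2*i+1) w *
          Real.log ((G.degree (w t) : ℝ) - 1)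
          = ((G.edgeFinset.card : ℝ))⁻¹ * ∑ v ∈ Sd R L t.1,
              (G.degree v : ℝ) * Real.log ((G.degree v : ℝ) - 1) := hmarg
      have hside : Real.log (d - 1) ≤ ((G.edgeFinset.card : ℝ))⁻¹ * ∑ v ∈ Sd R L t.1,
          (G.degree v : ℝ) * Real.log ((G.degree v : ℝ) - 1) := by
        rw [hdd]
        by_cases hp : t.1 % 2 = 0
        · rw [if_pos hp, show Sd R L t.1 = R from by unfold Sd; rw [if_pos hp]]
          exact jensen_side G hdeg R hLRne.2 hERr dR hdR
        · rw [if_neg hp, show Sd R L t.1 = L from by unfold Sd; rw [if_neg hp]]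
          exact jensen_side G hdeg L hLRne.1 hELr dL hdL
      calc d - 1 = Real.exp (Real.log (d - 1)) := (Real.exp_log (by linarith)).symm
        _ ≤ Real.exp (Real.log (∏ w ∈ WS G R (2*i+1),
              ((G.degree (w t) : ℝ) - 1) ^ (Pw G (2*i+1) w))) := by
            apply Real.exp_le_exp.mpr
            rw [hlogA, hmarg']
            exact hside
        _ = _ := Real.exp_log hApos
    · have hrw : ∀ w ∈ WS G R (2*i+1),
          (if 1 ≤ t.1 ∧ t.1 < 2*i+1 then (G.degree (w t) : ℝ) - 1 else 1) ^ (Pw G (2*i+1) w)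
            = 1 := fun w _ => by rw [if_neg h, Real.one_rpow]
      rw [Finset.prod_congr rfl hrw, Finset.prod_const_one, if_neg h]
  have hprod_le : ∏ t : Fin (2*i+2), cc t.1 ≤ ∏ t : Fin (2*i+2), ∏ w ∈ WS G R (2*i+1),
      (if 1 ≤ t.1 ∧ t.1 < 2*i+1 then (G.degree (w t) : ℝ) - 1 else 1)
        ^ (Pw G (2*i+1) w) :=
    Finset.prod_le_prod (fun t _ => hcc_nn t.1) (fun t _ => hbound t)
  -- value of the constant product
  have hct_val : ∏ t : Fin (2*i+2), cc t.1 = (dR-1)^i * (dL-1)^i := by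
    rw [Fin.prod_univ_eq_prod_range cc (2*i+2)]
    have hfil : (Finset.range (2*i+2)).filter (fun n => 1 ≤ n ∧ n < 2*i+1)
        = Finset.Ico 1 (2*i+1) := by
      ext n
      simp only [Finset.mem_filter, Finset.mem_range, Finset.mem_Ico]
      omega
    rw [hcc, ← Finset.prod_filter, hfil]
    exact prod_cc dR dL i
  -- final chain
  rw [ge_iff_le, hnum, div_eq_mul_inv]
  calc (dR - 1) ^ i * (dL - 1) ^ i = ∏ t : Fin (2*i+2), cc t.1 := hct_val.symm
    _ ≤ ∏ t : Fin (2*i+2), ∏ w ∈ WS G R (2*i+1),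
          (if 1 ≤ t.1 ∧ t.1 < 2*i+1 then (G.degree (w t) : ℝ) - 1 else 1)
            ^ (Pw G (2*i+1) w) := hprod_le
    _ = ∏ w ∈ WS G R (2*i+1),
          (WProd (2*i+1) (fun v => (G.degree v : ℝ) - 1) w) ^ (Pw G (2*i+1) w) := hgm_eq.symm
    _ ≤ ∑ w ∈ WS G R (2*i+1),
          Pw G (2*i+1) w * WProd (2*i+1) (fun v => (G.degree v : ℝ) - 1) w := hamgm
    _ = ((WS G R (2*i+1)).card : ℝ) * ((G.edgeFinset.card : ℝ))⁻¹ := hsum_card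
end
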